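/- arXiv:2502.18014 — 8 statements merged into one kernel-verified Lean document; each statement's English description precedes it below -/
import Mathlib

section
/- Fix an integer K ≥ 1 and a real number γ < 0. Let ψ = (ψ₁, …, ψ_K) be a K-tuple of functions ψ_k : [0,∞) → ℂ, each continuous on [0,∞) and differentiable on (0,∞), with ψ_k and its derivative ψ_k′ square-integrable on (0,∞). Then Σ_{k=1}^K ∫₀^∞ |ψ_k′(x)|² dx + (1/γ)|Σ_{k=1}^K ψ_k(0)|² ≥ −(K²/γ²) Σ_{k=1}^K ∫₀^∞ |ψ_k(x)|² dx. Moreover, equality holds for the tuple ψ_k(x) = e^{Kx/γ}, k = 1, …, K. -/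
open MeasureTheory


lemma trace_bound (f f' : ℝ → ℂ) (hc : ContinuousOn f (Set.Ici 0))
    (hd : ∀ x ∈ Set.Ioi (0:ℝ), HasDerivAt f (f' x) x)
    (hf : IntegrableOn (fun x => ‖f x‖^2) (Set.Ioi 0))
    (hf' : IntegrableOn (fun x => ‖f' x‖^2) (Set.Ioi 0))
    (a : ℝ) (ha : 0 < a) :
    ‖f 0‖^2 ≤ a * (∫ x in Set.Ioi (0:ℝ), ‖f' x‖^2)
      + (1/a) * ∫ x in Set.Ioi (0:ℝ), ‖f x‖^2 := by
  set g : ℝ → ℝ := fun x => 2 * ((starRingEnd ℂ) (f x) * f' x).re with hg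
  set φ : ℝ → ℝ := fun x => a * ‖f' x‖^2 + (1/a) * ‖f x‖^2 with hφ
  set h : ℝ → ℝ := fun x => ‖f x‖^2 with hh
  -- derivative of h
  have hder : ∀ x ∈ Set.Ioi (0:ℝ), HasDerivAt h (g x) x := by
    intro x hx
    have hre : HasDerivAt (fun y => (f y).re) ((f' x).re) x :=
      (Complex.reCLM.hasFDerivAt.comp_hasDerivAt x (hd x hx))
    have him : HasDerivAt (fun y => (f y).im) ((f' x).im) x :=
      (Complex.imCLM.hasFDerivAt.comp_hasDerivAt x (hd x hx))
    have h1 : HasDerivAt (fun y => (f y).re^2 + (f y).im^2)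
        (2*(f x).re*(f' x).re + 2*(f x).im*(f' x).im) x := by
      have := ((hre.fun_pow 2).fun_add (him.fun_pow 2))
      simpa [mul_comm, mul_assoc, mul_left_comm] using this
    have heq : (fun y => (f y).re^2 + (f y).im^2) = h := by
      funext y
      show (f y).re ^ 2 + (f y).im ^ 2 = ‖f y‖ ^ 2
      rw [Complex.sq_norm, Complex.normSq_apply]
      ring
    rw [heq] at h1
    convert h1 using 1
    simp [hg, Complex.mul_re]
    ring
  -- pointwise bound |g| ≤ φ
  have hbound : ∀ x, |g x| ≤ φ x := by
    intro x
    have h1 : |g x| ≤ 2 * (‖f x‖ * ‖f' x‖) := by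
      have := Complex.abs_re_le_norm ((starRingEnd ℂ) (f x) * f' x)
      have h2 : ‖(starRingEnd ℂ) (f x) * f' x‖ = ‖f x‖ * ‖f' x‖ := by
        simp [map_mul]
      rw [hg]
      calc |2 * ((starRingEnd ℂ) (f x) * f' x).re|
          = 2 * |((starRingEnd ℂ) (f x) * f' x).re| := by rw [abs_mul]; norm_num
        _ ≤ 2 * (‖f x‖ * ‖f' x‖) := by
            rw [← h2]; exact mul_le_mul_of_nonneg_left this (by norm_num)
    refine h1.trans ?_
    show 2 * (‖f x‖ * ‖f' x‖) ≤ a * ‖f' x‖ ^ 2 + 1 / a * ‖f x‖ ^ 2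
    have h3 := sq_nonneg (a * ‖f' x‖ - ‖f x‖)
    have h4 : 1/a * a = 1 := by field_simp
    nlinarith [norm_nonneg (f x), norm_nonneg (f' x), mul_pos ha ha]
  -- measurability
  have hmeasf : AEStronglyMeasurable f (volume.restrict (Set.Ioi 0)) :=
    (hc.mono (Set.Ioi_subset_Ici le_rfl)).aestronglyMeasurable measurableSet_Ioi
  have hf'eq : ∀ᵐ x ∂(volume.restrict (Set.Ioi 0)), deriv f x = f' x := by
    filter_upwards [ae_restrict_mem measurableSet_Ioi] with x hx
    exact (hd x hx).deriv
  have hmeasf' : AEStronglyMeasurable f' (volume.restrict (Set.Ioi 0)) :=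
    (measurable_deriv f).aestronglyMeasurable.congr hf'eq
  have hgmeas : AEStronglyMeasurable g (volume.restrict (Set.Ioi 0)) :=
    ((Complex.continuous_re.comp_aestronglyMeasurable
      (((Complex.continuous_conj.comp_aestronglyMeasurable hmeasf)).mul hmeasf')).const_mul 2)
  -- integrability
  have hφint : IntegrableOn φ (Set.Ioi 0) :=
    (hf'.const_mul a).add (hf.const_mul (1/a))
  have hgint : IntegrableOn g (Set.Ioi 0) := by
    apply hφint.mono' hgmeas
    exact Filter.Eventually.of_forall fun x => by
      rw [Real.norm_eq_abs]; exact hbound x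
  set I : ℝ := ∫ x in Set.Ioi (0:ℝ), φ x with hI
  -- FTC bound: h 0 ≤ h R + I for R > 0
  have hmain : ∀ R : ℝ, 0 < R → h 0 ≤ h R + I := by
    intro R hR
    have hconth : ContinuousOn h (Set.Icc 0 R) :=
      ((hc.mono (Set.Icc_subset_Ici_self)).norm.pow 2)
    have hginti : IntervalIntegrable g volume 0 R := by
      rw [intervalIntegrable_iff_integrableOn_Ioc_of_le hR.le]
      exact hgint.mono_set Set.Ioc_subset_Ioi_self
    have hftc : ∫ x in (0:ℝ)..R, g x = h R - h 0 :=
      intervalIntegral.integral_eq_sub_of_hasDerivAt_of_le hR.le hconth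
        (fun x hx => hder x (Set.mem_Ioi.mpr hx.1)) hginti
    have hlow : -I ≤ ∫ x in (0:ℝ)..R, g x := by
      rw [intervalIntegral.integral_of_le hR.le]
      have h1 : ∫ x in Set.Ioc (0:ℝ) R, (-φ) x ≤ ∫ x in Set.Ioc (0:ℝ) R, g x := by
        apply setIntegral_mono_on ((hφint.mono_set Set.Ioc_subset_Ioi_self).neg)
          (hgint.mono_set Set.Ioc_subset_Ioi_self) measurableSet_Ioc
        intro x _
        have := hbound x
        simp only [Pi.neg_apply]
        linarith [neg_abs_le (g x)]
      have h2 : ∫ x in Set.Ioc (0:ℝ) R, φ x ≤ I := by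
        rw [hI]
        apply setIntegral_mono_set hφint
        · exact Filter.Eventually.of_forall fun x => by positivity
        · exact HasSubset.Subset.eventuallyLE Set.Ioc_subset_Ioi_self
      simp only [Pi.neg_apply] at h1
      rw [integral_neg] at h1
      linarith
    linarith [hftc ▸ hlow]
  -- there are points where h is small
  have key : ∀ ε : ℝ, 0 < ε → ∃ R : ℝ, 0 < R ∧ h R < ε := by
    intro ε hε
    by_contra hcon
    push_neg at hcon
    have hint : Integrable (fun _ : ℝ => ε) (volume.restrict (Set.Ioi 0)) := by
      apply hf.mono' aestronglyMeasurable_const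
      filter_upwards [ae_restrict_mem measurableSet_Ioi] with x hx
      rw [Real.norm_eq_abs, abs_of_pos hε]
      exact hcon x hx
    rw [integrable_const_iff] at hint
    rcases hint with h0 | hfin
    · exact hε.ne' h0
    · have hfin := hfin.measure_univ_lt_top
      rw [Measure.restrict_apply_univ, Real.volume_Ioi] at hfin
      exact (lt_irrefl _ hfin)
  -- conclude h 0 ≤ I
  have hfinal : h 0 ≤ I := by
    by_contra hcon
    push_neg at hcon
    obtain ⟨R, hR, hhR⟩ := key (h 0 - I) (by linarith)
    linarith [hmain R hR]
  -- unfold I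
  have hIeq : I = a * (∫ x in Set.Ioi (0:ℝ), ‖f' x‖^2)
      + (1/a) * ∫ x in Set.Ioi (0:ℝ), ‖f x‖^2 := by
    rw [hI, hφ]
    rw [integral_add (hf'.const_mul a) (hf.const_mul (1/a)),
      integral_const_mul, integral_const_mul]
  rw [← hIeq]
  exact hfinal

-- exp integral
lemma exp_int (c : ℝ) (hc : c < 0) :
    ∫ x in Set.Ioi (0:ℝ), Real.exp (c*x) = -(1/c) := by
  have h := integral_Ioi_of_hasDerivAt_of_nonneg' (a := 0)
    (g := fun x => Real.exp (c*x) / c) (g' := fun x => Real.exp (c*x)) (l := 0)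
    (fun x _ => by
      have h1 : HasDerivAt (fun x : ℝ => c * x) c x := by
        simpa using (hasDerivAt_id x).const_mul c
      have h2 := (Real.hasDerivAt_exp (c*x)).comp x h1
      have h3 := h2.div_const c
      simpa [mul_comm, mul_div_assoc, mul_div_cancel_left₀ _ (ne_of_lt hc)] using h3)
    (fun x _ => (Real.exp_pos _).le)
    ?_
  · rw [h]
    simp [div_eq_mul_inv]
  · have : Filter.Tendsto (fun x : ℝ => c * x) Filter.atTop Filter.atBot :=
      Filter.Tendsto.const_mul_atTop_of_neg hc Filter.tendsto_id
    have := (Real.tendsto_exp_atBot.comp this).div_const c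
    simpa using this


/-- Bottom of the spectrum of the δ′-coupling star-graph Laplacian with `K` edges and
strength `γ < 0`: the quadratic form is bounded below by `-(K²/γ²)` times the squared `L²`
norm, with equality attained by the tuple `ψ_k(x) = e^{K x / γ}`. -/
theorem deltaPrime_quadratic_form_bound (K : ℕ) (hK : 1 ≤ K) (γ : ℝ) (hγ : γ < 0) :
    (∀ (ψ ψ' : Fin K → ℝ → ℂ),
      (∀ k, ContinuousOn (ψ k) (Set.Ici 0)) →
      (∀ k, ∀ x ∈ Set.Ioi (0:ℝ), HasDerivAt (ψ k) (ψ' k x) x) →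
      (∀ k, IntegrableOn (fun x => ‖ψ k x‖ ^ 2) (Set.Ioi 0)) →
      (∀ k, IntegrableOn (fun x => ‖ψ' k x‖ ^ 2) (Set.Ioi 0)) →
      (∑ k, ∫ x in Set.Ioi (0:ℝ), ‖ψ' k x‖ ^ 2) + (1 / γ) * ‖∑ k, ψ k 0‖ ^ 2 ≥
        -((K : ℝ) ^ 2 / γ ^ 2) * ∑ k, ∫ x in Set.Ioi (0:ℝ), ‖ψ k x‖ ^ 2) ∧
    ((∑ _k : Fin K, ∫ x in Set.Ioi (0:ℝ), ((K : ℝ) / γ * Real.exp (K * x / γ)) ^ 2)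
        + (1 / γ) * ‖∑ _k : Fin K, ((1 : ℂ))‖ ^ 2 =
      -((K : ℝ) ^ 2 / γ ^ 2) * ∑ _k : Fin K, ∫ x in Set.Ioi (0:ℝ),
        (Real.exp (K * x / γ)) ^ 2) := by
  have hKpos : (0:ℝ) < K := by exact_mod_cast hK
  have hγ0 : γ ≠ 0 := ne_of_lt hγ
  constructor
  · intro ψ ψ' hcont hderiv hint hint'
    set A : Fin K → ℝ := fun k => ∫ x in Set.Ioi (0:ℝ), ‖ψ' k x‖^2 with hA
    set B : Fin K → ℝ := fun k => ∫ x in Set.Ioi (0:ℝ), ‖ψ k x‖^2 with hB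
    set a : ℝ := -γ / K with ha
    have hapos : 0 < a := div_pos (neg_pos.mpr hγ) hKpos
    have htr : ∀ k, ‖ψ k 0‖^2 ≤ a * A k + (1/a) * B k := fun k =>
      trace_bound (ψ k) (ψ' k) (hcont k) (hderiv k) (hint k) (hint' k) a hapos
    have hCS : ‖∑ k, ψ k 0‖^2 ≤ (K:ℝ) * ∑ k, ‖ψ k 0‖^2 := by
      have h1 : ‖∑ k, ψ k 0‖^2 ≤ (∑ k, ‖ψ k 0‖)^2 := by
        have := norm_sum_le Finset.univ (fun k => ψ k 0)
        exact pow_le_pow_left₀ (norm_nonneg _) this 2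
      have h2 := sq_sum_le_card_mul_sum_sq (s := Finset.univ) (f := fun k => ‖ψ k 0‖)
      simp only [Finset.card_univ, Fintype.card_fin] at h2
      exact h1.trans h2
    have hsum : ∑ k, ‖ψ k 0‖^2 ≤ a * ∑ k, A k + (1/a) * ∑ k, B k := by
      rw [Finset.mul_sum, Finset.mul_sum, ← Finset.sum_add_distrib]
      exact Finset.sum_le_sum fun k _ => htr k
    have hγneg : (1/γ) ≤ 0 := le_of_lt (by exact div_neg_of_pos_of_neg one_pos hγ)
    have i1 : (1/γ) * ((K:ℝ) * ∑ k, ‖ψ k 0‖^2) ≤ (1/γ) * ‖∑ k, ψ k 0‖^2 :=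
      mul_le_mul_of_nonpos_left hCS hγneg
    have i2 : (1/γ) * ((K:ℝ) * (a * ∑ k, A k + (1/a) * ∑ k, B k)) ≤
        (1/γ) * ((K:ℝ) * ∑ k, ‖ψ k 0‖^2) :=
      mul_le_mul_of_nonpos_left (mul_le_mul_of_nonneg_left hsum hKpos.le) hγneg
    have hK0 : ((K:ℝ)) ≠ 0 := ne_of_gt hKpos
    have b1 : (1/γ) * ((K:ℝ) * a) = -1 := by rw [ha]; field_simp
    have b2 : (1/γ) * ((K:ℝ) * (1/a)) = -((K:ℝ)^2/γ^2) := by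
      rw [ha]; field_simp
    have e1 : (1/γ) * ((K:ℝ) * (a * ∑ k, A k + (1/a) * ∑ k, B k)) =
        -(∑ k, A k) - ((K:ℝ)^2/γ^2) * ∑ k, B k := by
      linear_combination (∑ k, A k) * b1 + (∑ k, B k) * b2
    rw [e1] at i2
    show (∑ k, A k) + (1/γ) * ‖∑ k, ψ k 0‖^2 ≥ -((K:ℝ)^2/γ^2) * ∑ k, B k
    linarith
  · -- equality case
    set c : ℝ := (K:ℝ)/γ with hc
    have hcneg : c < 0 := div_neg_of_pos_of_neg hKpos hγ
    have h2c : 2*c < 0 := by linarith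
    have int1 : ∫ x in Set.Ioi (0:ℝ), ((K:ℝ)/γ * Real.exp (K * x / γ))^2
        = c^2 * (-(1/(2*c))) := by
      have hpt : ∀ x : ℝ, ((K:ℝ)/γ * Real.exp (K * x / γ))^2
          = c^2 * Real.exp ((2*c) * x) := by
        intro x
        have hx : (K:ℝ) * x / γ = c * x := by rw [hc]; ring
        rw [hx, mul_pow, sq (Real.exp (c*x)), ← Real.exp_add]
        ring_nf
        rw [hc]
        ring
      simp_rw [hpt]
      rw [integral_const_mul, exp_int (2*c) h2c]
    have int2 : ∫ x in Set.Ioi (0:ℝ), (Real.exp (K * x / γ))^2 = -(1/(2*c)) := by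
      have hpt : ∀ x : ℝ, (Real.exp ((K:ℝ) * x / γ))^2 = Real.exp ((2*c) * x) := by
        intro x
        have hx : (K:ℝ) * x / γ = c * x := by rw [hc]; ring
        rw [hx, sq (Real.exp (c*x)), ← Real.exp_add]
        ring_nf
      simp_rw [hpt]
      rw [exp_int (2*c) h2c]
    have hnorm : ‖∑ _k : Fin K, (1:ℂ)‖ = (K:ℝ) := by simp
    rw [int1, int2, hnorm]
    simp only [Finset.sum_const, Finset.card_univ, Fintype.card_fin, nsmul_eq_mul]
    rw [hc]
    have hK0 : ((K:ℝ)) ≠ 0 := ne_of_gt hKpos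
    field_simp
    ring
end

section
/- Let K ≥ 1 be an integer, γ < 0, p > 1, and 0 < ω < γ²/K². Set b_ω = arctanh(K√ω/|γ|) and let φ(x) = ((p+1)ω/2)^{1/(p−1)} (sinh(((p−1)√ω/2)x + b_ω))^{−2/(p−1)}. Then b_ω > 0 and K·φ′(0) = γ·φ(0); consequently, the symmetric K-tuple (φ, …, φ) satisfies the δ-type vertex conditions on the star graph with K edges: all components have the same value at the vertex and the sum of the inward derivatives at the vertex equals γ times the common vertex value. -/
/-- The inverse hyperbolic tangent, `arctanh y = ½ log((1+y)/(1-y))`. -/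
noncomputable def arctanh (y : ℝ) : ℝ := Real.log ((1 + y) / (1 - y)) / 2

lemma arctanh_pos {y : ℝ} (h0 : 0 < y) (h1 : y < 1) : 0 < arctanh y := by
  unfold arctanh
  have : (1 : ℝ) < (1 + y) / (1 - y) := by
    rw [lt_div_iff₀ (by linarith)]; linarith
  have := Real.log_pos this
  linarith

lemma sinh_div_cosh_arctanh {y : ℝ} (h0 : 0 < y) (h1 : y < 1) :
    Real.sinh (arctanh y) / Real.cosh (arctanh y) = y := by
  set b := arctanh y with hb
  have hr : (0:ℝ) < (1 + y) / (1 - y) := div_pos (by linarith) (by linarith)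
  have he : Real.exp (2 * b) = (1 + y) / (1 - y) := by
    rw [hb]; unfold arctanh
    rw [show 2 * (Real.log ((1 + y) / (1 - y)) / 2) = Real.log ((1+y)/(1-y)) by ring]
    exact Real.exp_log hr
  have ht : Real.exp b * Real.exp b = (1 + y) / (1 - y) := by
    rw [← Real.exp_add] at *; rw [← he]; ring_nf
  have hpos : 0 < Real.exp b := Real.exp_pos b
  rw [Real.sinh_eq, Real.cosh_eq, Real.exp_neg]
  have hy1 : (1:ℝ) - y ≠ 0 := by linarith
  field_simp
  rw [sq, ht]
  field_simp
  ring

/-- With `b_ω = arctanh(K√ω/|γ|)`, the explicit profile satisfies the δ-type vertex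
condition on the star graph with `K` edges: `K φ′(0) = γ φ(0)`, hence the symmetric
`K`-tuple `(φ, …, φ)` has a common vertex value and the sum of its inward derivatives
at the vertex equals `γ` times that common value. -/
theorem delta_vertex_condition (K : ℕ) (hK : 1 ≤ K) (γ p ω : ℝ)
    (hγ : γ < 0) (hp : 1 < p) (hω0 : 0 < ω) (hω1 : ω < γ ^ 2 / (K : ℝ) ^ 2)
    (b : ℝ) (hb : b = arctanh ((K : ℝ) * Real.sqrt ω / |γ|))
    (φ : ℝ → ℝ)
    (hφ : ∀ x, φ x = ((p + 1) * ω / 2) ^ (1 / (p - 1)) *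
      (Real.sinh ((p - 1) * Real.sqrt ω / 2 * x + b)) ^ (-2 / (p - 1))) :
    0 < b ∧ (K : ℝ) * deriv φ 0 = γ * φ 0 ∧
      (∑ _k : Fin K, deriv φ 0) = γ * φ 0 := by
  have hKpos : (0:ℝ) < (K:ℝ) := by exact_mod_cast hK
  have hγabs : |γ| = -γ := abs_of_neg hγ
  have hsω : 0 < Real.sqrt ω := Real.sqrt_pos.mpr hω0
  set y : ℝ := (K : ℝ) * Real.sqrt ω / |γ| with hy
  have hy0 : 0 < y := div_pos (by positivity) (abs_pos.mpr (ne_of_lt hγ))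
  have hy1 : y < 1 := by
    rw [hy, div_lt_one (abs_pos.mpr (ne_of_lt hγ))]
    have hsq : ω * (K:ℝ)^2 < γ^2 := (lt_div_iff₀ (by positivity)).mp hω1
    have h1 : (K:ℝ) * Real.sqrt ω = Real.sqrt ((K:ℝ)^2 * ω) := by
      rw [Real.sqrt_mul (by positivity), Real.sqrt_sq hKpos.le]
    rw [h1, ← Real.sqrt_sq_eq_abs]
    exact Real.sqrt_lt_sqrt (by positivity) (by linarith)
  have hbpos : 0 < b := hb ▸ arctanh_pos hy0 hy1
  have htanh : Real.sinh b / Real.cosh b = y := hb ▸ sinh_div_cosh_arctanh hy0 hy1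
  -- derivative computation
  set a : ℝ := (p - 1) * Real.sqrt ω / 2 with ha
  set C : ℝ := ((p + 1) * ω / 2) ^ (1 / (p - 1)) with hC
  set e : ℝ := -2 / (p - 1) with he
  have hsinhb : 0 < Real.sinh b := Real.sinh_pos_iff.mpr hbpos
  have hinner : HasDerivAt (fun x : ℝ => a * x + b) a 0 := by
    simpa using ((hasDerivAt_id (0:ℝ)).const_mul a).add_const b
  have hsinh : HasDerivAt (fun x : ℝ => Real.sinh (a * x + b))
      (Real.cosh (a * 0 + b) * a) 0 := (Real.hasDerivAt_sinh _).comp 0 hinner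
  have hrpow : HasDerivAt (fun x : ℝ => Real.sinh (a * x + b) ^ e)
      (e * Real.sinh (a * 0 + b) ^ (e - 1) * (Real.cosh (a * 0 + b) * a)) 0 := by
    have hne : Real.sinh (a * 0 + b) ≠ 0 := by
      simp only [mul_zero, zero_add]; exact ne_of_gt hsinhb
    exact (Real.hasDerivAt_rpow_const (Or.inl hne)).comp 0 hsinh
  have hφd : HasDerivAt φ
      (C * (e * Real.sinh (a * 0 + b) ^ (e - 1) * (Real.cosh (a * 0 + b) * a))) 0 := by
    have := hrpow.const_mul C
    refine this.congr_of_eventuallyEq ?_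
    filter_upwards with x
    rw [hφ x]
  have hderiv : deriv φ 0 =
      C * (e * Real.sinh b ^ (e - 1) * (Real.cosh b * a)) := by
    simpa using hφd.deriv
  have hφ0 : φ 0 = C * Real.sinh b ^ e := by rw [hφ 0]; simp
  have hsub : Real.sinh b ^ (e - 1) = Real.sinh b ^ e / Real.sinh b :=
    Real.rpow_sub_one (ne_of_gt hsinhb) e
  have hcosh : 0 < Real.cosh b := Real.cosh_pos b
  -- key scalar identity : K * e * a * cosh b / sinh b = γ
  have hkey : (K:ℝ) * (e * (Real.sinh b ^ e / Real.sinh b) * (Real.cosh b * a))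
      = γ * Real.sinh b ^ e := by
    have hp1 : p - 1 ≠ 0 := by intro h; simp [sub_eq_zero] at h; linarith
    have hea : e * a = -Real.sqrt ω := by
      rw [he, ha]; field_simp
    have hsc : Real.sinh b = y * Real.cosh b := by
      field_simp at htanh; linarith [htanh]
    have hγne : γ ≠ 0 := ne_of_lt hγ
    have hyval : (K:ℝ) * Real.sqrt ω = y * (-γ) := by
      rw [hy, hγabs, div_mul_cancel₀ _ (neg_ne_zero.mpr hγne)]
    have hcne : Real.cosh b ≠ 0 := ne_of_gt hcosh
    have hyne : y ≠ 0 := ne_of_gt hy0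
    have hcoef : (K:ℝ) * (e * a) * Real.cosh b / Real.sinh b = γ := by
      rw [hea, hsc]
      have h2 : (K:ℝ) * -Real.sqrt ω = y * γ := by linarith [hyval]
      rw [h2]
      field_simp
    calc (K:ℝ) * (e * (Real.sinh b ^ e / Real.sinh b) * (Real.cosh b * a))
        = ((K:ℝ) * (e * a) * Real.cosh b / Real.sinh b) * Real.sinh b ^ e := by ring
      _ = γ * Real.sinh b ^ e := by rw [hcoef]
  have hmain : (K:ℝ) * deriv φ 0 = γ * φ 0 := by
    rw [hderiv, hφ0, hsub]
    simp only [mul_zero, zero_add] at *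
    calc (K:ℝ) * (C * (e * (Real.sinh b ^ e / Real.sinh b) * (Real.cosh b * a)))
        = C * ((K:ℝ) * (e * (Real.sinh b ^ e / Real.sinh b) * (Real.cosh b * a))) := by ring
      _ = C * (γ * Real.sinh b ^ e) := by rw [hkey]
      _ = γ * (C * Real.sinh b ^ e) := by ring
  refine ⟨hbpos, hmain, ?_⟩
  rw [Finset.sum_const, Finset.card_univ, Fintype.card_fin, nsmul_eq_mul]
  exact hmain
end

section
/- Let K ≥ 1 be an integer, γ < 0, p > 1, and 0 < ω < K²/γ². Set b_ω = arctanh(|γ|√ω/K) and let φ(x) = ((p+1)ω/2)^{1/(p−1)} (sinh(((p−1)√ω/2)x + b_ω))^{−2/(p−1)}. Then b_ω > 0 and K·φ(0) = γ·φ′(0); consequently, the symmetric K-tuple (φ, …, φ) satisfies the δ′-type vertex conditions on the star graph with K edges: all components have the same derivative at the vertex and the sum of the vertex values equals γ times the common derivative value. -/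
/-- With `b_ω = arctanh(|γ|√ω/K)`, the explicit profile satisfies the δ′-type vertex
condition on the star graph with `K` edges: `K φ(0) = γ φ′(0)`, hence the symmetric
`K`-tuple `(φ, …, φ)` has a common vertex derivative and the sum of its vertex values
equals `γ` times that common derivative. -/
theorem deltaPrime_vertex_condition (K : ℕ) (hK : 1 ≤ K) (γ p ω : ℝ)
    (hγ : γ < 0) (hp : 1 < p) (hω0 : 0 < ω) (hω1 : ω < (K : ℝ) ^ 2 / γ ^ 2)
    (b : ℝ) (hb : b = arctanh (|γ| * Real.sqrt ω / (K : ℝ)))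
    (φ : ℝ → ℝ)
    (hφ : ∀ x, φ x = ((p + 1) * ω / 2) ^ (1 / (p - 1)) *
      (Real.sinh ((p - 1) * Real.sqrt ω / 2 * x + b)) ^ (-2 / (p - 1))) :
    0 < b ∧ (K : ℝ) * φ 0 = γ * deriv φ 0 ∧
      (∑ _k : Fin K, φ 0) = γ * deriv φ 0 := by
  have hK0 : (0 : ℝ) < (K : ℝ) := by exact_mod_cast hK
  set t : ℝ := |γ| * Real.sqrt ω / (K : ℝ) with ht
  have hsω : 0 < Real.sqrt ω := Real.sqrt_pos.mpr hω0
  have ht0 : 0 < t :=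
    div_pos (mul_pos (abs_pos.mpr (ne_of_lt hγ)) hsω) hK0
  have ht1 : t < 1 := by
    rw [div_lt_one hK0]
    have h2 : (|γ| * Real.sqrt ω) ^ 2 < (K : ℝ) ^ 2 := by
      rw [mul_pow, sq_abs, Real.sq_sqrt hω0.le]
      have hγne : γ ≠ 0 := ne_of_lt hγ
      have hγ2 : 0 < γ ^ 2 := by positivity
      calc γ ^ 2 * ω < γ ^ 2 * ((K : ℝ) ^ 2 / γ ^ 2) := by
            exact (mul_lt_mul_iff_right₀ hγ2).mpr hω1
        _ = (K : ℝ) ^ 2 := by field_simp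
    exact lt_of_pow_lt_pow_left₀ 2 hK0.le h2
  -- r = (1+t)/(1-t) > 1
  set r : ℝ := (1 + t) / (1 - t) with hr
  have h1t : 0 < 1 - t := by linarith
  have hr1 : 1 < r := by
    rw [hr, lt_div_iff₀ h1t]; linarith
  have hr0 : 0 < r := lt_trans one_pos hr1
  have hb' : b = Real.log r / 2 := hb
  have hbpos : 0 < b := by
    rw [hb']; have := Real.log_pos hr1; linarith
  -- exp b ^ 2 = r
  have hE2 : Real.exp b ^ 2 = r := by
    rw [← Real.exp_nat_mul]
    have : (2 : ℝ) * b = Real.log r := by rw [hb']; ring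
    rw [show ((2:ℕ):ℝ) * b = (2:ℝ) * b by norm_num, this, Real.exp_log hr0]
  have hEpos : 0 < Real.exp b := Real.exp_pos b
  -- sinh b = t * cosh b
  have hsc : Real.sinh b = t * Real.cosh b := by
    have h2 : Real.exp b ^ 2 * (1 - t) = 1 + t := by
      rw [hE2, hr]; field_simp
    rw [Real.sinh_eq, Real.cosh_eq, Real.exp_neg]
    have hEne : Real.exp b ≠ 0 := hEpos.ne'
    field_simp
    nlinarith [h2, sq_nonneg (Real.exp b)]
  have hcoshpos : 0 < Real.cosh b := Real.cosh_pos b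
  have hsinhpos : 0 < Real.sinh b := by
    rw [hsc]; exact mul_pos ht0 hcoshpos
  -- the derivative
  set a : ℝ := (p - 1) * Real.sqrt ω / 2 with ha
  set q : ℝ := -2 / (p - 1) with hq
  set C : ℝ := ((p + 1) * ω / 2) ^ (1 / (p - 1)) with hC
  set S : ℝ := Real.sinh b with hS
  have hlin : HasDerivAt (fun x : ℝ => a * x + b) a 0 := by
    simpa using ((hasDerivAt_id (0:ℝ)).const_mul a).add_const b
  have hsinh : HasDerivAt (fun x : ℝ => Real.sinh (a * x + b))
      (Real.cosh (a * 0 + b) * a) 0 := (Real.hasDerivAt_sinh _).comp 0 hlin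
  have hab0 : a * 0 + b = b := by ring
  rw [hab0] at hsinh
  have hpow : HasDerivAt (fun y : ℝ => y ^ q) (q * S ^ (q - 1))
      (Real.sinh ((fun x : ℝ => a * x + b) 0)) := by
    simp only [hab0]
    exact Real.hasDerivAt_rpow_const (Or.inl hsinhpos.ne')
  have hcomp : HasDerivAt (fun x : ℝ => Real.sinh (a * x + b) ^ q)
      (q * S ^ (q - 1) * (Real.cosh b * a)) 0 := by
    have hs2 : HasDerivAt (fun x : ℝ => Real.sinh (a * x + b)) (Real.cosh b * a) 0 := hsinh
    exact hpow.comp (0 : ℝ) hs2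
  have hφ' : HasDerivAt φ (C * (q * S ^ (q - 1) * (Real.cosh b * a))) 0 := by
    have := hcomp.const_mul C
    refine HasDerivAt.congr_of_eventuallyEq this ?_
    filter_upwards with x
    rw [hφ x]
  have hderiv : deriv φ 0 = C * (q * S ^ (q - 1) * (Real.cosh b * a)) := hφ'.deriv
  have hφ0 : φ 0 = C * S ^ q := by rw [hφ 0, hab0]
  -- key identity
  have hp1 : p - 1 ≠ 0 := by linarith
  have hqa : q * a = -Real.sqrt ω := by
    rw [hq, ha]; field_simp
  have hSq : S ^ (q - 1) = S ^ q / S := by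
    rw [Real.rpow_sub hsinhpos, Real.rpow_one]
  have hSqpos : 0 < S ^ q := Real.rpow_pos_of_pos hsinhpos q
  have hKS : (K : ℝ) * S = -γ * Real.sqrt ω * Real.cosh b := by
    rw [hsc, ht, abs_of_neg hγ]
    field_simp
  have key : (K : ℝ) * φ 0 = γ * deriv φ 0 := by
    rw [hφ0, hderiv, hSq]
    have hSne : S ≠ 0 := hsinhpos.ne'
    have hSS : S * S⁻¹ = 1 := mul_inv_cancel₀ hSne
    linear_combination (C * S ^ q * S⁻¹) * hKS - γ * C * S ^ q * S⁻¹ * Real.cosh b * hqa - (K : ℝ) * C * S ^ q * hSS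
  refine ⟨hbpos, key, ?_⟩
  rw [Finset.sum_const, ← key]
  simp [mul_comm]
end

section
/- Let p > 1 and ω > 0. Let u : [0,∞) → ℝ be continuous on [0,∞), twice continuously differentiable on (0,∞), strictly positive on [0,∞), satisfy u″(x) = ω u(x) + u(x)^p for every x > 0, and satisfy u(x) → 0 as x → ∞. Then there exists b > 0 such that u(x) = ((p+1)ω/2)^{1/(p−1)} (sinh(((p−1)√ω/2)x + b))^{−2/(p−1)} for every x ≥ 0. -/
open Real Set Filter

/-- A function continuous on `[a,∞)` with zero derivative on `(a,∞)` is constant there. -/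
lemma aux_const_of_deriv_zero {f f' : ℝ → ℝ} {a : ℝ} (hc : ContinuousOn f (Set.Ici a))
    (hd : ∀ x ∈ Set.Ioi a, HasDerivAt f (f' x) x) (h0 : ∀ x ∈ Set.Ioi a, f' x = 0) :
    ∀ x ∈ Set.Ici a, f x = f a := by
  have hd' : ∀ x ∈ interior (Set.Ici a), HasDerivWithinAt f (f' x) (interior (Set.Ici a)) x := by
    rw [interior_Ici]; exact fun x hx => (hd x hx).hasDerivWithinAt
  have h0' : ∀ x ∈ interior (Set.Ici a), f' x = 0 := by
    rw [interior_Ici]; exact h0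
  have hmono := monotoneOn_of_hasDerivWithinAt_nonneg (convex_Ici a) hc hd'
    (fun x hx => (h0' x hx).ge)
  have hanti := antitoneOn_of_hasDerivWithinAt_nonpos (convex_Ici a) hc hd'
    (fun x hx => (h0' x hx).le)
  intro x hx
  exact le_antisymm (hanti Set.self_mem_Ici hx hx) (hmono Set.self_mem_Ici hx hx)

set_option maxHeartbeats 1000000 in
/-- Classification of positive decaying solutions of the stationary defocusing NLS
`-u″ + ωu + u^p = 0` on the half-line: any positive `C²` solution tending to `0` at
infinity equals the explicit `sinh`-profile for some shift `b > 0`. -/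
theorem classification_positive_decaying (p ω : ℝ) (hp : 1 < p) (hω : 0 < ω)
    (u u' u'' : ℝ → ℝ)
    (hcont : ContinuousOn u (Set.Ici 0))
    (hd1 : ∀ x ∈ Set.Ioi (0:ℝ), HasDerivAt u (u' x) x)
    (hd2 : ∀ x ∈ Set.Ioi (0:ℝ), HasDerivAt u' (u'' x) x)
    (hc2 : ContinuousOn u'' (Set.Ioi 0))
    (hpos : ∀ x ≥ (0:ℝ), 0 < u x)
    (hode : ∀ x ∈ Set.Ioi (0:ℝ), u'' x = ω * u x + u x ^ p)
    (hdecay : Filter.Tendsto u Filter.atTop (nhds 0)) :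
    ∃ b > (0:ℝ), ∀ x ≥ (0:ℝ),
      u x = ((p + 1) * ω / 2) ^ (1 / (p - 1)) *
        (Real.sinh ((p - 1) * Real.sqrt ω / 2 * x + b)) ^ (-2 / (p - 1)) := by
  have hp1 : (0:ℝ) < p - 1 := by linarith
  have hp2 : (0:ℝ) < p + 1 := by linarith
  -- u'' > 0 on (0,∞)
  have hupp : ∀ x ∈ Set.Ioi (0:ℝ), 0 < u'' x := by
    intro x hx
    have h1 : 0 < u x := hpos x (le_of_lt hx)
    have h2 : 0 < u x ^ p := Real.rpow_pos_of_pos h1 p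
    rw [hode x hx]; positivity
  have hu'cont : ContinuousOn u' (Set.Ioi 0) :=
    fun x hx => (hd2 x hx).continuousAt.continuousWithinAt
  have hucont' : ContinuousOn u (Set.Ioi 0) :=
    fun x hx => (hd1 x hx).continuousAt.continuousWithinAt
  -- u' strictly increasing on (0,∞)
  have hmono : StrictMonoOn u' (Set.Ioi 0) := by
    apply strictMonoOn_of_deriv_pos (convex_Ioi 0) hu'cont
    intro x hx
    rw [interior_Ioi] at hx
    rw [(hd2 x hx).deriv]
    exact hupp x hx
  -- u' < 0 on (0,∞)
  have hu'neg : ∀ x ∈ Set.Ioi (0:ℝ), u' x < 0 := by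
    by_contra hcon
    push_neg at hcon
    obtain ⟨x0, hx0, hx0'⟩ := hcon
    have hx0pos : (0:ℝ) < x0 := hx0
    set x1 := x0 + 1 with hx1def
    have hx1pos : (0:ℝ) < x1 := by linarith
    set c := u' x1 with hcdef
    have hc : 0 < c :=
      lt_of_le_of_lt hx0' (hmono hx0 (Set.mem_Ioi.mpr hx1pos) (by linarith))
    have hsub : Set.Ici x1 ⊆ Set.Ioi 0 := fun t ht => lt_of_lt_of_le hx1pos ht
    have key : ∀ x, x1 ≤ x → u x1 + c * (x - x1) ≤ u x := by
      have hmonoW : MonotoneOn (fun t => u t - c * t) (Set.Ici x1) := by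
        apply monotoneOn_of_hasDerivWithinAt_nonneg (convex_Ici x1)
          (f' := fun t => u' t - c)
        · exact (hucont'.mono hsub).sub ((continuous_const.mul continuous_id).continuousOn)
        · intro t ht
          rw [interior_Ici] at ht
          have : HasDerivAt (fun s => u s - c * s) (u' t - c) t := by
            exact ((hd1 t (hsub (Set.mem_Ici.mpr (le_of_lt ht)))).sub ((hasDerivAt_id t).const_mul c)).congr_deriv (by ring)
          exact this.hasDerivWithinAt
        · intro t ht
          rw [interior_Ici] at ht
          have : c ≤ u' t :=
            (hmono.monotoneOn) (Set.mem_Ioi.mpr hx1pos) (hsub (Set.mem_Ici.mpr (le_of_lt ht))) (le_of_lt ht)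
          linarith
      intro x hx
      have := hmonoW (Set.self_mem_Ici) (Set.mem_Ici.mpr hx) hx
      simp only at this
      nlinarith
    have h1 := hdecay.eventually (gt_mem_nhds one_pos)
    obtain ⟨X, hX⟩ := Filter.eventually_atTop.mp h1
    set x := max X x1 + (1 + |1 - u x1|) / c with hxdef
    have hq : (0:ℝ) ≤ (1 + |1 - u x1|) / c := by positivity
    have hxx1 : x1 ≤ x := by
      have := le_max_right X x1; simp only [hxdef]; linarith
    have hxX : X ≤ x := by
      have := le_max_left X x1; simp only [hxdef]; linarith
    have h2 := key x hxx1
    have h3 := hX x hxX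
    have h5 : 1 - u x1 ≤ |1 - u x1| := le_abs_self _
    have h6 : 1 + |1 - u x1| ≤ c * (x - x1) := by
      have hge : (1 + |1 - u x1|) / c ≤ x - x1 := by
        have := le_max_right X x1; simp only [hxdef]; linarith
      calc (1:ℝ) + |1 - u x1| = c * ((1 + |1 - u x1|) / c) := by field_simp
        _ ≤ c * (x - x1) := mul_le_mul_of_nonneg_left hge hc.le
    linarith
  -- u' tends to 0 at infinity
  have hu'0 : Filter.Tendsto u' Filter.atTop (nhds 0) := by
    set g := fun x : ℝ => u' (max x 1) with hgdef
    have hgmono : Monotone g := by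
      intro a b hab
      exact hmono.monotoneOn (Set.mem_Ioi.mpr (lt_of_lt_of_le one_pos (le_max_right a 1)))
        (Set.mem_Ioi.mpr (lt_of_lt_of_le one_pos (le_max_right b 1)))
        (max_le_max hab le_rfl)
    have hgneg : ∀ x, g x < 0 :=
      fun x => hu'neg _ (Set.mem_Ioi.mpr (lt_of_lt_of_le one_pos (le_max_right x 1)))
    have hbdd : BddAbove (Set.range g) := ⟨0, by rintro _ ⟨x, rfl⟩; exact (hgneg x).le⟩
    have hgt := tendsto_atTop_ciSup hgmono hbdd
    set L := ⨆ x, g x with hLdef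
    have hL0 : L ≤ 0 := ciSup_le (fun x => (hgneg x).le)
    have hgu : g =ᶠ[Filter.atTop] u' := by
      filter_upwards [Filter.eventually_ge_atTop 1] with x hx
      simp [hgdef, max_eq_left hx]
    have hu'L : Filter.Tendsto u' Filter.atTop (nhds L) := hgt.congr' hgu
    have hL : L = 0 := by
      by_contra hLne
      have hLlt : L < 0 := lt_of_le_of_ne hL0 hLne
      have hle : ∀ x, 1 ≤ x → u' x ≤ L := by
        intro x hx
        have h := le_ciSup hbdd x
        simpa [hgdef, max_eq_left hx] using h
      have hsub : Set.Ici (1:ℝ) ⊆ Set.Ioi 0 := fun t ht => Set.mem_Ioi.mpr (lt_of_lt_of_le one_pos (Set.mem_Ici.mp ht))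
      have hant : AntitoneOn (fun t => u t - L * t) (Set.Ici 1) := by
        apply antitoneOn_of_hasDerivWithinAt_nonpos (convex_Ici 1) (f' := fun t => u' t - L)
        · exact (hucont'.mono hsub).sub ((continuous_const.mul continuous_id).continuousOn)
        · intro t ht; rw [interior_Ici] at ht
          have : HasDerivAt (fun s => u s - L * s) (u' t - L) t := by
            exact ((hd1 t (hsub (Set.mem_Ici.mpr ht.le))).sub ((hasDerivAt_id t).const_mul L)).congr_deriv (by ring)
          exact this.hasDerivWithinAt
        · intro t ht; rw [interior_Ici] at ht
          have := hle t ht.le; linarith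
      have hu1 : 0 < u 1 := hpos 1 zero_le_one
      set x := 1 + (u 1 + 1) / (-L) with hxdef
      have hx1 : (1:ℝ) ≤ x := by
        have h : 0 ≤ (u 1 + 1)/(-L) := div_nonneg (by linarith) (by linarith)
        simp only [hxdef]; linarith
      have h2 := hant Set.self_mem_Ici (Set.mem_Ici.mpr hx1) hx1
      simp only at h2
      have hLne' : L ≠ 0 := hLne
      have h3 : (x - 1) * (-L) = u 1 + 1 := by
        have hx' : x - 1 = (u 1 + 1) / (-L) := by simp [hxdef]
        rw [hx']; exact div_mul_cancel₀ _ (by linarith : -L ≠ 0)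
      have h4 := hpos x (by linarith)
      nlinarith
    rw [hL] at hu'L; exact hu'L
  -- the first-order equation
  have hfirst : ∀ x ∈ Set.Ioi (0:ℝ),
      u' x = -(u x * Real.sqrt (ω + 2/(p+1) * u x ^ (p-1))) := by
    set E := fun x => u' x ^ 2 - ω * u x ^ 2 - 2/(p+1) * u x ^ (p+1) with hEdef
    have hEderiv : ∀ x ∈ Set.Ioi (0:ℝ), HasDerivAt E 0 x := by
      intro x hx
      have hux : 0 < u x := hpos x hx.le
      have h1 := (hd2 x hx).pow 2
      have h2 := ((hd1 x hx).pow 2).const_mul ω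
      have h3 := ((hd1 x hx).rpow_const (p := p + 1) (Or.inl hux.ne')).const_mul (2/(p+1))
      have hcomb := (h1.sub h2).sub h3
      refine hcomb.congr_deriv ?_
      rw [hode x hx]
      have hq : p + 1 - 1 = p := by ring
      rw [hq]
      field_simp
      ring
    have hEconst : ∀ x y : ℝ, 0 < x → x ≤ y → E y = E x := by
      intro x y hx hxy
      exact aux_const_of_deriv_zero (f' := fun _ => (0:ℝ))
        (fun t ht => (hEderiv t (lt_of_lt_of_le hx ht)).continuousAt.continuousWithinAt)
        (fun t ht => hEderiv t (lt_trans hx ht)) (fun _ _ => rfl) y hxy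
    have hE0 : Filter.Tendsto E Filter.atTop (nhds 0) := by
      have h1 : Filter.Tendsto (fun x => u' x ^ 2) Filter.atTop (nhds 0) := by
        simpa using hu'0.pow 2
      have h2 : Filter.Tendsto (fun x => ω * u x ^ 2) Filter.atTop (nhds 0) := by
        simpa using (hdecay.pow 2).const_mul ω
      have h3 : Filter.Tendsto (fun x => 2/(p+1) * u x ^ (p+1)) Filter.atTop (nhds 0) := by
        have hc := (Real.continuousAt_rpow_const 0 (p+1) (Or.inr (by linarith))).tendsto
        have h := hc.comp hdecay
        rw [Real.zero_rpow (by linarith : p + 1 ≠ 0)] at h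
        simpa using h.const_mul (2/(p+1))
      simpa using (h1.sub h2).sub h3
    have hEzero : ∀ x ∈ Set.Ioi (0:ℝ), E x = 0 := by
      intro x hx
      refine tendsto_nhds_unique tendsto_const_nhds (hE0.congr' ?_)
      filter_upwards [Filter.eventually_ge_atTop x] with z hz
      exact hEconst x z hx hz
    intro x hx
    have hux : 0 < u x := hpos x hx.le
    have hE := hEzero x hx
    set g := Real.sqrt (ω + 2/(p+1) * u x ^ (p-1)) with hgdef
    have hbase : 0 < ω + 2/(p+1) * u x ^ (p-1) := by
      have := Real.rpow_pos_of_pos hux (p-1); positivity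
    have hg2 : g ^ 2 = ω + 2/(p+1) * u x ^ (p-1) := Real.sq_sqrt hbase.le
    have hsplit : u x ^ (p+1) = u x ^ (p-1) * u x ^ (2:ℕ) := by
      rw [← Real.rpow_natCast (u x) 2, ← Real.rpow_add hux]
      congr 1; push_cast; ring
    have hsq : u' x ^ 2 = (u x * g) ^ 2 := by
      have hE' : u' x ^ 2 = ω * u x ^ 2 + 2/(p+1) * u x ^ (p+1) := by
        simp only [hEdef] at hE; linarith
      rw [hE', hsplit, mul_pow, hg2]; ring
    rcases sq_eq_sq_iff_eq_or_eq_neg.mp hsq with h | h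
    · exfalso
      have hgpos : 0 < g := Real.sqrt_pos.mpr hbase
      have := hu'neg x hx
      nlinarith
    · exact h
  -- constants
  set C := ((p + 1) * ω / 2) ^ (1 / (p - 1)) with hCdef
  have hCpos : 0 < C := Real.rpow_pos_of_pos (by positivity) _
  have hCp : C ^ (p - 1) = (p + 1) * ω / 2 := by
    rw [hCdef, ← Real.rpow_mul (by positivity), one_div_mul_cancel hp1.ne', Real.rpow_one]
  set α := (p - 1) * Real.sqrt ω / 2 with hαdef
  have hsqω : 0 < Real.sqrt ω := Real.sqrt_pos.mpr hω
  have hαpos : 0 < α := by rw [hαdef]; positivity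
  set A := fun x => (C / u x) ^ ((p - 1) / 2) with hAdef
  set y := fun x => Real.arsinh (A x) with hydef
  have hApos : ∀ x ≥ (0:ℝ), 0 < A x :=
    fun x hx => Real.rpow_pos_of_pos (div_pos hCpos (hpos x hx)) _
  -- derivative of y is α on (0,∞)
  have hyderiv : ∀ x ∈ Set.Ioi (0:ℝ), HasDerivAt y α x := by
    intro x hx
    have hux : 0 < u x := hpos x hx.le
    have hCu : 0 < C / u x := div_pos hCpos hux
    set g := Real.sqrt (ω + 2/(p+1) * u x ^ (p-1)) with hgdef
    have hbase : 0 < ω + 2/(p+1) * u x ^ (p-1) := by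
      have := Real.rpow_pos_of_pos hux (p-1); positivity
    have hgpos : 0 < g := Real.sqrt_pos.mpr hbase
    have hg2 : g ^ 2 = ω + 2/(p+1) * u x ^ (p-1) := Real.sq_sqrt hbase.le
    have hq : HasDerivAt (fun t => C / u t) ((C / u x) * g) x := by
      have h := ((hd1 x hx).inv hux.ne').const_mul C
      have he : C * (-u' x / u x ^ 2) = (C / u x) * g := by
        rw [hfirst x hx, ← hgdef]; field_simp
      rw [← he]
      simpa [div_eq_mul_inv] using h
    have hA' : HasDerivAt A (((p-1)/2) * A x * g) x := by
      have h2 := hq.rpow_const (p := (p-1)/2) (Or.inl hCu.ne')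
      convert h2 using 1
      rw [Real.rpow_sub_one hCu.ne']
      simp only [hAdef]
      field_simp
    have hy' := (Real.hasDerivAt_arsinh (A x)).comp x hA'
    have key : A x * g = Real.sqrt ω * Real.sqrt (1 + A x ^ 2) := by
      have hA2 : A x ^ 2 = (C / u x) ^ (p - 1) := by
        simp only [hAdef]
        rw [← Real.rpow_natCast ((C / u x) ^ ((p-1)/2)) 2, ← Real.rpow_mul hCu.le]
        congr 1; push_cast; field_simp
      have hmul : (C / u x) ^ (p-1) * u x ^ (p-1) = C ^ (p-1) := by
        rw [← Real.mul_rpow hCu.le hux.le, div_mul_cancel₀ _ hux.ne']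
      have haux : 2/(p+1) * ((C / u x) ^ (p-1) * u x ^ (p-1)) = ω := by
        rw [hmul, hCp]; field_simp
      have h2 : (A x * g) ^ 2 = ω * (1 + A x ^ 2) := by
        rw [mul_pow, hA2, hg2]
        linear_combination haux
      have hAg : 0 ≤ A x * g := mul_nonneg (hApos x hx.le).le hgpos.le
      calc A x * g = Real.sqrt ((A x * g) ^ 2) := (Real.sqrt_sq hAg).symm
        _ = Real.sqrt (ω * (1 + A x ^ 2)) := by rw [h2]
        _ = Real.sqrt ω * Real.sqrt (1 + A x ^ 2) := Real.sqrt_mul hω.le _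
    have hsqA : 0 < Real.sqrt (1 + A x ^ 2) := Real.sqrt_pos.mpr (by positivity)
    have hfin : (Real.sqrt (1 + A x ^ 2))⁻¹ * (((p-1)/2) * A x * g) = α := by
      rw [hαdef]
      have : ((p-1)/2) * (A x * g) = ((p-1)/2) * (Real.sqrt ω * Real.sqrt (1 + A x ^ 2)) := by
        rw [key]
      field_simp
      nlinarith [key]
    rw [← hfin]
    exact hy'
  -- y is continuous on [0,∞)
  have hAcont : ContinuousOn A (Set.Ici 0) := by
    apply ContinuousOn.rpow_const
    · exact continuousOn_const.div hcont (fun x hx => (hpos x hx).ne')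
    · exact fun x hx => Or.inl (div_pos hCpos (hpos x hx)).ne'
  have hycont : ContinuousOn y (Set.Ici 0) := Real.continuous_arsinh.comp_continuousOn hAcont
  -- y x - α x is constant on [0,∞)
  have hconst : ∀ x ∈ Set.Ici (0:ℝ), y x - α * x = y 0 - α * 0 := by
    apply aux_const_of_deriv_zero (f' := fun _ => (0:ℝ))
    · exact hycont.sub ((continuous_const.mul continuous_id).continuousOn)
    · intro x hx
      have : HasDerivAt (fun t => y t - α * t) (α - α) x := by
        exact ((hyderiv x hx).sub ((hasDerivAt_id x).const_mul α)).congr_deriv (by ring)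
      simpa using this
    · exact fun _ _ => rfl
  refine ⟨y 0, Real.arsinh_pos_iff.mpr (hApos 0 le_rfl), ?_⟩
  intro x hx
  have hux : 0 < u x := hpos x hx
  have hCu : 0 < C / u x := div_pos hCpos hux
  have hyx : y x = α * x + y 0 := by
    have := hconst x hx; linarith
  have hAS : A x = Real.sinh (α * x + y 0) := by
    rw [← hyx]
    simp only [hydef]
    rw [Real.sinh_arsinh]
  have hSpos : 0 < Real.sinh (α * x + y 0) := by rw [← hAS]; exact hApos x hx
  have hCuA : C / u x = A x ^ (2 / (p - 1)) := by
    simp only [hAdef]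
    rw [← Real.rpow_mul hCu.le]
    have he : (p-1)/2 * (2/(p-1)) = 1 := by field_simp
    rw [he, Real.rpow_one]
  rw [hAS] at hCuA
  have hfinal : u x = C * Real.sinh (α * x + y 0) ^ (-(2 / (p - 1))) := by
    rw [Real.rpow_neg hSpos.le, ← hCuA]
    field_simp
  rw [hfinal]
  congr 1
  rw [neg_div]
end

section
/- Let p > 1, b > 0, and define φ : [0,∞) → ℝ by φ(x) = (((p−1)/√(2(p+1)))·x + b)^{−2/(p−1)}. Then φ is positive and twice differentiable on [0,∞) and satisfies φ″(x) = φ(x)^p for every x > 0 (that is, −φ″ + φ^p = 0 on (0,∞)). Moreover, for any integer K ≥ 1 and any γ < 0, choosing b = (K/|γ|)·√(2/(p+1)) yields K·φ′(0) = γ·φ(0), so that the symmetric K-tuple (φ, …, φ) satisfies the δ-type vertex conditions on the star graph with K edges and coupling strength γ. -/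
/-- For `ω = 0`, the power profile `φ(x) = ((p-1)/√(2(p+1)) x + b)^{-2/(p-1)}` is positive,
twice differentiable on `[0,∞)`, solves `φ″ = φ^p` on `(0,∞)`, and for
`b = (K/|γ|)√(2/(p+1))` the symmetric `K`-tuple satisfies the δ-type vertex conditions. -/
theorem power_profile_solves (p b : ℝ) (hp : 1 < p) (hb : 0 < b)
    (φ : ℝ → ℝ)
    (hφ : ∀ x, φ x = ((p - 1) / Real.sqrt (2 * (p + 1)) * x + b) ^ (-2 / (p - 1))) :
    (∀ x ≥ (0:ℝ), 0 < φ x) ∧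
    (∃ φ' φ'' : ℝ → ℝ,
      (∀ x ≥ (0:ℝ), HasDerivAt φ (φ' x) x) ∧
      (∀ x ≥ (0:ℝ), HasDerivAt φ' (φ'' x) x) ∧
      (∀ x > (0:ℝ), φ'' x = φ x ^ p)) ∧
    (∀ K : ℕ, 1 ≤ K → ∀ γ : ℝ, γ < 0 →
      b = ((K : ℝ) / |γ|) * Real.sqrt (2 / (p + 1)) →
      (K : ℝ) * deriv φ 0 = γ * φ 0 ∧ (∑ _k : Fin K, deriv φ 0) = γ * φ 0) := by
  have hp1 : (0:ℝ) < p - 1 := by linarith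
  have h2p : (0:ℝ) < 2 * (p + 1) := by linarith
  set s := Real.sqrt (2 * (p + 1)) with hs_def
  have hs : 0 < s := Real.sqrt_pos.mpr h2p
  have hs2 : s ^ 2 = 2 * (p + 1) := Real.sq_sqrt h2p.le
  set c := (p - 1) / s with hc_def
  have hc : 0 < c := div_pos hp1 hs
  set α := -2 / (p - 1) with hα_def
  clear_value s c α
  have hφf : φ = fun x => (c * x + b) ^ α := funext fun x => hφ x
  subst hφf
  have hbase : ∀ x ≥ (0:ℝ), 0 < c * x + b := by
    intro x hx
    have : 0 ≤ c * x := mul_nonneg hc.le hx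
    linarith
  -- first derivative
  have hd1 : ∀ x ≥ (0:ℝ),
      HasDerivAt (fun x => (c * x + b) ^ α) (c * α * (c * x + b) ^ (α - 1)) x := by
    intro x hx
    have hlin : HasDerivAt (fun x : ℝ => c * x + b) c x := by
      simpa using ((hasDerivAt_id x).const_mul c).add_const b
    exact hlin.rpow_const (Or.inl (hbase x hx).ne')
  -- second derivative
  have hd2 : ∀ x ≥ (0:ℝ),
      HasDerivAt (fun x => c * α * (c * x + b) ^ (α - 1))
        (c * α * (c * (α - 1) * (c * x + b) ^ (α - 1 - 1))) x := by
    intro x hx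
    have hlin : HasDerivAt (fun x : ℝ => c * x + b) c x := by
      simpa using ((hasDerivAt_id x).const_mul c).add_const b
    exact ((hlin.rpow_const (Or.inl (hbase x hx).ne')).const_mul (c * α))
  refine ⟨?_, ⟨fun x => c * α * (c * x + b) ^ (α - 1),
      fun x => c * α * (c * (α - 1) * (c * x + b) ^ (α - 1 - 1)), hd1, hd2, ?_⟩, ?_⟩
  · intro x hx
    exact Real.rpow_pos_of_pos (hbase x hx) _
  · -- the ODE
    intro x hx
    have hbx := hbase x hx.le
    have hcc : c ^ 2 = (p - 1) ^ 2 / (2 * (p + 1)) := by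
      rw [hc_def, div_pow, hs2]
    have hαp : α * p = α - 1 - 1 := by
      rw [hα_def]; field_simp; ring
    have hcoef : α * (α - 1) * c ^ 2 = 1 := by
      rw [hcc, hα_def]; field_simp; ring
    have h1 : c * α * (c * (α - 1)) = 1 := by linear_combination hcoef
    show c * α * (c * (α - 1) * (c * x + b) ^ (α - 1 - 1)) = ((c * x + b) ^ α) ^ p
    rw [← Real.rpow_mul hbx.le, hαp]
    linear_combination ((c * x + b) ^ (α - 1 - 1)) * h1
  · -- vertex conditions
    intro K hK γ hγ hbγ
    have hγ0 : γ ≠ 0 := ne_of_lt hγ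
    have hsq : Real.sqrt (2 / (p + 1)) = 2 / s := by
      rw [show (2:ℝ)/(p+1) = (2/s)^2 by rw [div_pow, hs2]; field_simp,
        Real.sqrt_sq (by positivity)]
    have habs : |γ| = -γ := abs_of_neg hγ
    have hb' : b = (K : ℝ) / (-γ) * (2 / s) := by rw [hbγ, habs, hsq]
    have hαc : α * c = -2 / s := by
      rw [hα_def, hc_def]; field_simp
    have hderiv : deriv (fun x => (c * x + b) ^ α) 0 = c * α * (c * 0 + b) ^ (α - 1) :=
      (hd1 0 le_rfl).deriv
    have hmain : (K : ℝ) * deriv (fun x => (c * x + b) ^ α) 0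
        = γ * (c * 0 + b) ^ α := by
      rw [hderiv]
      have h0 : c * 0 + b = b := by ring
      rw [h0]
      rw [show α - 1 = α - (1:ℝ) from rfl, Real.rpow_sub hb, Real.rpow_one]
      have hbα : (0:ℝ) < b ^ α := Real.rpow_pos_of_pos hb α
      have hkey : (K : ℝ) * (α * c) = γ * b := by
        rw [hαc, hb']; field_simp
      field_simp
      linear_combination hkey
    refine ⟨by simpa using hmain, ?_⟩
    rw [Finset.sum_const, Finset.card_univ, Fintype.card_fin, nsmul_eq_mul]
    simpa using hmain
end

section
/- Let p ≥ 5 and let u : [0,∞) → ℝ be continuous on [0,∞) and twice continuously differentiable on (0,∞), satisfy u″(x) = |u(x)|^{p−1} u(x) for every x > 0, and be such that u and u′ are square-integrable on (0,∞). Then u(x) = 0 for every x ≥ 0. -/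
open MeasureTheory

private lemma mvt_le {f f' : ℝ → ℝ} {a b : ℝ} (hab : a ≤ b)
    (hd : ∀ x ∈ Set.Icc a b, HasDerivAt f (f' x) x)
    (h0 : ∀ x ∈ Set.Ioo a b, 0 ≤ f' x) : f a ≤ f b := by
  rcases eq_or_lt_of_le hab with rfl | h
  · exact le_rfl
  · obtain ⟨c, hc, hc'⟩ := exists_hasDerivAt_eq_slope f f' h
      (fun x hx => (hd x hx).continuousAt.continuousWithinAt)
      (fun x hx => hd x (Set.Ioo_subset_Icc_self hx))
    have h1 := h0 c hc
    rw [hc'] at h1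
    have h2 : 0 < b - a := by linarith
    nlinarith [(div_nonneg_iff.mp h1).resolve_right (fun ⟨_, hb⟩ => absurd h2 (by linarith))]

private lemma mvt_eq {f f' : ℝ → ℝ} {a b : ℝ} (hab : a ≤ b)
    (hd : ∀ x ∈ Set.Icc a b, HasDerivAt f (f' x) x)
    (h0 : ∀ x ∈ Set.Ioo a b, f' x = 0) : f b = f a := by
  refine le_antisymm ?_ (mvt_le hab hd (fun x hx => (h0 x hx).ge))
  have := mvt_le (f := fun t => -f t) (f' := fun t => -f' t) hab
    (fun x hx => (hd x hx).neg) (fun x hx => by simp [h0 x hx])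
  linarith

private lemma habs (t r : ℝ) : ((t^2 : ℝ)) ^ r = |t| ^ (2*r) := by
  rw [← sq_abs, ← Real.rpow_natCast |t| 2, ← Real.rpow_mul (abs_nonneg t)]
  norm_num

private lemma not_int_of_lb {f : ℝ → ℝ} {M c : ℝ} (hc : 0 < c)
    (hf : IntegrableOn f (Set.Ioi M)) (hb : ∀ x ∈ Set.Ioi M, c ≤ f x) : False := by
  have h1 : Integrable (fun _ : ℝ => c) (volume.restrict (Set.Ioi M)) := by
    refine hf.mono' aestronglyMeasurable_const ?_
    rw [ae_restrict_iff' measurableSet_Ioi]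
    filter_upwards with x hx
    rw [Real.norm_eq_abs, abs_of_pos hc]
    exact hb x hx
  rw [integrable_const_iff] at h1
  rcases h1 with h | h
  · exact hc.ne' h
  · have h := h.measure_univ_lt_top
    simp [Measure.restrict_apply_univ, Real.volume_Ioi] at h

set_option maxHeartbeats 1000000 in
/-- For `p ≥ 5` and `ω = 0`, any `H¹` solution of `u″ = |u|^{p-1} u` on the half-line
vanishes identically. -/
theorem critical_halfline_vanishing (p : ℝ) (hp : 5 ≤ p) (u u' u'' : ℝ → ℝ)
    (hcont : ContinuousOn u (Set.Ici 0))
    (hd1 : ∀ x ∈ Set.Ioi (0:ℝ), HasDerivAt u (u' x) x)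
    (hd2 : ∀ x ∈ Set.Ioi (0:ℝ), HasDerivAt u' (u'' x) x)
    (hc2 : ContinuousOn u'' (Set.Ioi 0))
    (hode : ∀ x ∈ Set.Ioi (0:ℝ), u'' x = |u x| ^ (p - 1) * u x)
    (hL2 : IntegrableOn (fun x => (u x) ^ 2) (Set.Ioi 0))
    (hL2' : IntegrableOn (fun x => (u' x) ^ 2) (Set.Ioi 0)) :
    ∀ x ≥ (0:ℝ), u x = 0 := by
  have hp1 : (0:ℝ) < p + 1 := by linarith
  set s : ℝ := (p+1)/2 with hs
  set q : ℝ := (p+3)/4 with hq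
  have hq1 : 1 ≤ q - 1 := by rw [hq]; linarith
  set k : ℝ := Real.sqrt (8/(p+1)) with hk
  have hkpos : 0 < k := Real.sqrt_pos.mpr (by positivity)
  set v : ℝ → ℝ := fun x => u x ^ 2 with hvdef
  set dv : ℝ → ℝ := fun x => 2 * u x * u' x with hdvdef
  set W : ℝ → ℝ := fun x => (u x ^ 2) ^ s with hWdef
  have hWnn : ∀ x, 0 ≤ W x := fun x => Real.rpow_nonneg (sq_nonneg _) s
  have hucont : ContinuousOn u (Set.Ioi 0) :=
    fun x hx => (hd1 x hx).continuousAt.continuousWithinAt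
  have hu'cont : ContinuousOn u' (Set.Ioi 0) :=
    fun x hx => (hd2 x hx).continuousAt.continuousWithinAt
  -- derivative of v
  have hdv : ∀ x ∈ Set.Ioi (0:ℝ), HasDerivAt v (dv x) x := by
    intro x hx
    have := (hd1 x hx).pow 2
    refine this.congr_deriv ?_
    rw [hdvdef]; push_cast; ring
  -- key pointwise identity: t * (|t|^(p-1) * t) = (t^2)^s
  have hmulid : ∀ t : ℝ, t * (|t| ^ (p-1) * t) = (t^2) ^ s := by
    intro t
    rw [habs]
    have h1 : 2 * s = (p-1) + 2 := by rw [hs]; ring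
    rw [h1, Real.rpow_add' (abs_nonneg t) (by linarith)]
    have h2 : |t| ^ (2:ℝ) = t ^ 2 := by
      rw [show (2:ℝ) = ((2:ℕ):ℝ) by norm_num, Real.rpow_natCast, sq_abs]
    rw [h2]; ring
  -- derivative of dv
  have hdvd : ∀ x ∈ Set.Ioi (0:ℝ), HasDerivAt dv (2*(u' x^2 + W x)) x := by
    intro x hx
    have h := ((hd1 x hx).mul (hd2 x hx)).const_mul 2
    have heq : dv = fun y => 2 * (u y * u' y) := by
      funext y; simp only [hdvdef]; ring
    rw [heq]
    refine h.congr_deriv ?_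
    rw [hode x hx]
    have h3 : W x = (u x^2)^s := rfl
    rw [h3, ← hmulid (u x)]; ring
  have hdvcont : ContinuousOn dv (Set.Ioi 0) :=
    fun x hx => (hdvd x hx).continuousAt.continuousWithinAt
  -- energy
  set E : ℝ → ℝ := fun x => u' x^2/2 - W x/(p+1) with hEdef
  have hE' : ∀ x ∈ Set.Ioi (0:ℝ), HasDerivAt E 0 x := by
    intro x hx
    have h1 : HasDerivAt (fun t => u' t^2/2) (u' x * u'' x) x := by
      have := ((hd2 x hx).pow 2).div_const 2
      refine this.congr_deriv ?_
      try (push_cast; ring)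
    have h3 : HasDerivAt (fun t => (u t^2)^s) (s * (u x^2)^(s-1) * dv x) x := by
      have := (Real.hasDerivAt_rpow_const (x := u x^2) (p := s)
        (Or.inr (by rw [hs]; linarith))).comp x (hdv x hx)
      refine this.congr_deriv ?_
      try ring
    have h4 := h1.sub (h3.div_const (p+1))
    refine h4.congr_deriv ?_
    rw [hode x hx]
    have h5 : (u x^2)^(s-1) = |u x| ^ (p-1) := by
      have : s - 1 = (p-1)/2 := by rw [hs]; ring
      rw [this, habs]
      congr 1; ring
    rw [h5, hdvdef, hs]
    field_simp
    ring
  -- energy is constant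
  have hEc : ∀ a b : ℝ, 0 < a → a ≤ b → E b = E a := by
    intro a b ha hab
    exact mvt_eq (f' := fun _ => (0:ℝ)) hab
      (fun x hx => hE' x (lt_of_lt_of_le ha hx.1)) (fun x _ => rfl)
  -- dv is integrable
  have hdvInt : IntegrableOn dv (Set.Ioi 0) := by
    refine (hL2.add hL2').mono' ?_ ?_
    · exact (((continuousOn_const.mul hucont).mul hu'cont).aestronglyMeasurable
        measurableSet_Ioi)
    · rw [ae_restrict_iff' measurableSet_Ioi]
      filter_upwards with x hx
      rw [hdvdef, Real.norm_eq_abs, abs_mul, abs_mul, abs_two]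
      refine le_trans (two_mul_le_add_sq |u x| |u' x|) ?_
      simp [hvdef, sq_abs]
  -- v tends to a limit L at infinity
  have hFTC : ∀ x : ℝ, 1 ≤ x → ∫ t in (1:ℝ)..x, dv t = v x - v 1 := by
    intro x hx1
    apply intervalIntegral.integral_eq_sub_of_hasDerivAt
    · intro t ht
      rw [Set.uIcc_of_le hx1] at ht
      exact hdv t (lt_of_lt_of_le one_pos ht.1)
    · apply ContinuousOn.intervalIntegrable
      refine hdvcont.mono ?_
      rw [Set.uIcc_of_le hx1]
      exact fun t ht => lt_of_lt_of_le one_pos ht.1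
  have hT : Filter.Tendsto (fun x => ∫ t in (1:ℝ)..x, dv t) Filter.atTop
      (nhds (∫ t in Set.Ioi 1, dv t)) :=
    intervalIntegral_tendsto_integral_Ioi 1
      (hdvInt.mono_set (Set.Ioi_subset_Ioi (by norm_num))) Filter.tendsto_id
  have hvtend : Filter.Tendsto v Filter.atTop
      (nhds (v 1 + ∫ t in Set.Ioi 1, dv t)) := by
    apply (hT.const_add (v 1)).congr'
    filter_upwards [Filter.eventually_ge_atTop 1] with x hx
    rw [hFTC x hx]; ring
  -- the limit is 0
  have hL0 : v 1 + (∫ t in Set.Ioi 1, dv t) = 0 := by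
    by_contra hne
    have hLnn : 0 ≤ v 1 + ∫ t in Set.Ioi 1, dv t :=
      ge_of_tendsto hvtend (by filter_upwards with x using sq_nonneg _)
    have hLpos : 0 < v 1 + ∫ t in Set.Ioi 1, dv t :=
      lt_of_le_of_ne hLnn (Ne.symm hne)
    set L := v 1 + ∫ t in Set.Ioi 1, dv t
    have hev : ∀ᶠ x in Filter.atTop, L/2 < v x :=
      hvtend.eventually_mem (Ioi_mem_nhds (half_lt_self hLpos))
    obtain ⟨M, hM⟩ := (hev.and (Filter.eventually_ge_atTop 0)).exists_forall_of_atTop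
    refine not_int_of_lb (M := max M 0) (half_pos hLpos)
      (hL2.mono_set (Set.Ioi_subset_Ioi (le_max_right _ _))) ?_
    intro x hx
    exact (hM x (le_trans (le_max_left _ _) (le_of_lt hx))).1.le
  have hvlim : Filter.Tendsto v Filter.atTop (nhds 0) := hL0 ▸ hvtend
  -- u'^2 is frequently small
  have hfreq : ∀ ε : ℝ, 0 < ε → ∃ᶠ x in Filter.atTop, u' x^2 < ε := by
    intro ε hε
    by_contra hcon
    rw [Filter.not_frequently] at hcon
    simp only [not_lt] at hcon
    obtain ⟨M, hM⟩ := (hcon.and (Filter.eventually_ge_atTop 0)).exists_forall_of_atTop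
    refine not_int_of_lb (M := max M 0) hε
      (hL2'.mono_set (Set.Ioi_subset_Ioi (le_max_right _ _))) ?_
    intro x hx
    exact (hM x (le_trans (le_max_left _ _) (le_of_lt hx))).1
  -- W tends to 0
  have hWlim : Filter.Tendsto W Filter.atTop (nhds 0) := by
    have hc : ContinuousAt (fun t : ℝ => t ^ s) 0 :=
      Real.continuousAt_rpow_const 0 s (Or.inr (by rw [hs]; linarith))
    have h := hc.tendsto.comp hvlim
    rw [Real.zero_rpow (by rw [hs]; intro h0; nlinarith : s ≠ 0)] at h
    exact h
  -- energy is zero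
  have hE0 : ∀ x ∈ Set.Ioi (0:ℝ), E x = 0 := by
    suffices h1 : E 1 = 0 by
      intro x hx
      rcases le_total 1 x with h | h
      · rw [hEc 1 x one_pos h, h1]
      · rw [← hEc x 1 hx h, h1]
    by_contra hC
    have hCpos : 0 < |E 1| := abs_pos.mpr hC
    have h1 : ∀ᶠ x in Filter.atTop, W x < |E 1| ∧ 1 ≤ x :=
      (hWlim.eventually_mem (Iio_mem_nhds hCpos)).and (Filter.eventually_ge_atTop 1)
    obtain ⟨x, hxf, hxW, hx1⟩ := ((hfreq _ hCpos).and_eventually h1).exists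
    have hEx : E x = E 1 := hEc 1 x one_pos hx1
    have hexp : u' x^2/2 - W x/(p+1) = E 1 := hEx
    have hWd : W x / (p+1) ≤ W x / 6 :=
      div_le_div_of_nonneg_left (hWnn x) (by norm_num) (by linarith)
    have hWd2 : W x / 6 < |E 1| / 6 := by linarith
    have hWd3 : 0 ≤ W x / (p+1) := div_nonneg (hWnn x) hp1.le
    clear_value W E
    rcases abs_cases (E 1) with ⟨habs1, hsgn⟩ | ⟨habs1, hsgn⟩
    · rw [habs1] at hxf hxW
      linarith [sq_nonneg (u' x)]
    · rw [habs1] at hxf hxW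
      linarith [sq_nonneg (u' x)]
  -- pointwise identity for u'^2
  have hkey : ∀ x ∈ Set.Ioi (0:ℝ), u' x^2 = 2/(p+1) * W x := by
    intro x hx
    have h := hE0 x hx
    have h2 : u' x^2/2 - W x/(p+1) = 0 := h
    clear_value W E
    field_simp at h2 ⊢
    linarith
  -- v' is nonpositive
  have hdvle : ∀ x ∈ Set.Ioi (0:ℝ), dv x ≤ 0 := by
    intro x0 hx0
    by_contra hcon
    push_neg at hcon
    have hmono : ∀ y, x0 ≤ y → dv x0 ≤ dv y := by
      intro y hy
      refine mvt_le (f' := fun t => 2*(u' t^2 + W t)) hy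
        (fun t ht => hdvd t (lt_of_lt_of_le hx0 ht.1)) (fun t _ => ?_)
      have := hWnn t; positivity
    have hlin : ∀ y, x0 ≤ y → v x0 + dv x0 * (y - x0) ≤ v y := by
      intro y hy
      have h := mvt_le (f := fun t => v t - t * dv x0) (f' := fun t => dv t - dv x0) hy
        (fun t ht => (hdv t (lt_of_lt_of_le hx0 ht.1)).sub (hasDerivAt_mul_const (dv x0)))
        (fun t ht => sub_nonneg.2 (hmono t ht.1.le))
      nlinarith
    have h1 : Filter.Tendsto (fun y => v x0 + dv x0 * (y - x0)) Filter.atTop Filter.atTop := by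
      apply Filter.tendsto_atTop_add_const_left
      exact (Filter.tendsto_atTop_add_const_right _ (-x0) Filter.tendsto_id).const_mul_atTop hcon
    have h2 := h1.eventually_ge_atTop 1
    have h3 := hvlim.eventually_mem (Iio_mem_nhds one_pos)
    obtain ⟨y, hy1, hy3, hyx0⟩ := (h2.and (h3.and (Filter.eventually_ge_atTop x0))).exists
    have h4 := hlin y hyx0
    have h5 : v y < 1 := hy3
    clear_value v dv
    linarith
  -- v' = -k v^q
  have hsign : ∀ x ∈ Set.Ioi (0:ℝ), dv x = -(k * v x ^ q) := by
    intro x hx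
    have hk2 : k^2 = 8/(p+1) := Real.sq_sqrt (by positivity)
    have hq2 : (v x ^ q)^2 = (u x^2) ^ ((p+3)/2) := by
      rw [sq, ← Real.rpow_add' (sq_nonneg (u x)) (by rw [hq]; intro h0; nlinarith)]
      congr 1
      rw [hq]; ring
    have hu2 : u x^2 * (u x^2)^s = (u x^2)^((p+3)/2) := by
      nth_rewrite 1 [← Real.rpow_one (u x^2)]
      rw [← Real.rpow_add' (sq_nonneg _) (by rw [hs]; intro h0; nlinarith)]
      congr 1
      rw [hs]; ring
    have h2 : (dv x)^2 = (k * v x ^ q)^2 := by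
      have hkx := hkey x hx
      have hdvx : dv x = 2 * u x * u' x := rfl
      have hWx : W x = (u x^2)^s := rfl
      rw [hWx] at hkx
      have hexp : (dv x)^2 = 4 * (u x^2) * (u' x^2) := by rw [hdvx]; ring
      rw [hexp, mul_pow, hq2, hk2, hkx, ← hu2]
      ring
    have h3 : |dv x| = |k * v x ^ q| := by
      rw [← Real.sqrt_sq_eq_abs, ← Real.sqrt_sq_eq_abs, h2]
    have h4 : 0 ≤ k * v x ^ q :=
      mul_nonneg hkpos.le (Real.rpow_nonneg (sq_nonneg _) q)
    rw [abs_of_nonpos (hdvle x hx), abs_of_nonneg h4] at h3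
    linarith
  -- v vanishes on the open half-line
  have hposlemma : ∀ x₀, 0 < x₀ → 0 < v x₀ → False := by
    intro x₀ hx₀ hvx₀
    set B : ℝ := (q - 1) * k with hBdef
    have hB : 0 < B := mul_pos (by linarith) hkpos
    have h1q0 : (1:ℝ) - q ≠ 0 := by intro h0; rw [sub_eq_zero] at h0; rw [← h0] at hq1; linarith
    -- affine behaviour of v^(1-q) while v > 0
    have haffine : ∀ b, x₀ ≤ b → (∀ t ∈ Set.Icc x₀ b, 0 < v t) →
        v b ^ (1-q) - b * B = v x₀ ^ (1-q) - x₀ * B := by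
      intro b hb hpos
      refine mvt_eq (f := fun t => v t ^ (1-q) - t * B)
        (f' := fun t => (1-q) * v t ^ (1-q-1) * dv t - B) hb (fun t ht => ?_) (fun t ht => ?_)
      · have ht0 : (0:ℝ) < t := lt_of_lt_of_le hx₀ ht.1
        exact ((Real.hasDerivAt_rpow_const (Or.inl (hpos t ht).ne')).comp t
          (hdv t ht0)).sub (hasDerivAt_mul_const B)
      · have htI := Set.Ioo_subset_Icc_self ht
        have hvt := hpos t htI
        have ht0 : (0:ℝ) < t := lt_of_lt_of_le hx₀ htI.1
        show (1-q) * v t ^ (1-q-1) * dv t - B = 0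
        rw [hsign t ht0, hBdef]
        have hone : v t ^ (1-q-1) * v t ^ q = 1 := by
          rw [← Real.rpow_add hvt]
          norm_num
        linear_combination ((q-1) * k) * hone
    -- v stays positive to the right of x₀
    have hpos : ∀ x, x₀ ≤ x → 0 < v x := by
      by_contra hcon
      push_neg at hcon
      obtain ⟨z, hz1, hz2⟩ := hcon
      have hvz : v z = 0 := le_antisymm hz2 (sq_nonneg (u z))
      set Z : Set ℝ := {x | x₀ ≤ x ∧ v x = 0} with hZdef
      have hZne : Z.Nonempty := ⟨z, hz1, hvz⟩
      have hZbdd : BddBelow Z := ⟨x₀, fun t ht => ht.1⟩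
      have hvcont : ContinuousOn v (Set.Ioi 0) :=
        fun t ht => (hdv t ht).continuousAt.continuousWithinAt
      have hZclosed : IsClosed Z := by
        have hmax : Continuous (fun x : ℝ => v (max x x₀)) :=
          hvcont.comp_continuous (continuous_id.max continuous_const)
            (fun x => lt_of_lt_of_le hx₀ (le_max_right _ _))
        have hZeq : Z = Set.Ici x₀ ∩ (fun x : ℝ => v (max x x₀)) ⁻¹' {0} := by
          ext t
          simp only [hZdef, Set.mem_setOf_eq, Set.mem_inter_iff, Set.mem_Ici,
            Set.mem_preimage, Set.mem_singleton_iff]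
          constructor
          · rintro ⟨h1, h2⟩; exact ⟨h1, by rwa [max_eq_left h1]⟩
          · rintro ⟨h1, h2⟩; exact ⟨h1, by rwa [max_eq_left h1] at h2⟩
        rw [hZeq]
        exact isClosed_Ici.inter (isClosed_singleton.preimage hmax)
      obtain ⟨x1, hx1Z, hx1le⟩ : ∃ x1, x1 ∈ Z ∧ ∀ t ∈ Z, x1 ≤ t :=
        ⟨sInf Z, hZclosed.csInf_mem hZne hZbdd, fun t ht => csInf_le hZbdd ht⟩
      have hx01 : x₀ < x1 := lt_of_le_of_ne hx1Z.1 (by rintro rfl; exact hvx₀.ne' hx1Z.2)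
      have hpos' : ∀ t, x₀ ≤ t → t < x1 → 0 < v t := by
        intro t ht1 ht2
        rcases lt_or_eq_of_le (sq_nonneg (u t)) with h | h
        · exact h
        · exact absurd (hx1le t ⟨ht1, h.symm⟩) (not_le.mpr ht2)
      set Mb := v x₀ ^ (1-q) + B * (x1 - x₀) with hMbdef
      have hMb : 0 < Mb := add_pos (Real.rpow_pos_of_pos hvx₀ _) (mul_pos hB (by linarith))
      have hlb : ∀ t, x₀ ≤ t → t < x1 → Mb ^ ((1-q)⁻¹) ≤ v t := by
        intro t ht1 ht2
        have hposIcc : ∀ r ∈ Set.Icc x₀ t, 0 < v r :=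
          fun r hr => hpos' r hr.1 (lt_of_le_of_lt hr.2 ht2)
        have haff := haffine t ht1 hposIcc
        have hvt := hpos' t ht1 ht2
        have hle : v t ^ (1-q) ≤ Mb := by
          rw [hMbdef]
          have hBt : 0 ≤ B * (x1 - t) := mul_nonneg hB.le (by linarith)
          nlinarith [haff]
        have hrw : (v t ^ (1-q)) ^ ((1-q)⁻¹) = v t := by
          rw [← Real.rpow_mul hvt.le, mul_inv_cancel₀ h1q0, Real.rpow_one]
        calc Mb ^ ((1-q)⁻¹)
            ≤ (v t ^ (1-q)) ^ ((1-q)⁻¹) :=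
              Real.rpow_le_rpow_of_nonpos (Real.rpow_pos_of_pos hvt _) hle
                (inv_nonpos.mpr (by linarith))
          _ = v t := hrw
      have hcx1 : ContinuousAt v x1 := (hdv x1 (lt_trans hx₀ hx01)).continuousAt
      have htt : Filter.Tendsto v (nhdsWithin x1 (Set.Iio x1)) (nhds (v x1)) :=
        hcx1.tendsto.mono_left nhdsWithin_le_nhds
      have hge : Mb ^ ((1-q)⁻¹) ≤ v x1 := by
        refine ge_of_tendsto htt ?_
        filter_upwards [Ioo_mem_nhdsLT_of_mem (Set.mem_Ioc.mpr ⟨hx01, le_refl x1⟩)] with t ht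
        exact hlb t ht.1.le ht.2
      rw [hx1Z.2] at hge
      exact absurd hge (not_le.mpr (Real.rpow_pos_of_pos hMb _))
    -- explicit decay: v y^(1-q) is affine in y
    have haff2 : ∀ y, x₀ ≤ y → v y ^ (1-q) = v x₀ ^ (1-q) - x₀*B + B*y := by
      intro y hy
      have h := haffine y hy (fun t ht => hpos t ht.1)
      linear_combination h
    set A := v x₀ ^ (1-q) - x₀ * B with hAdef
    set c := (|A| + B)⁻¹ with hcdef
    have hcpos : 0 < c := inv_pos.mpr (add_pos_of_nonneg_of_pos (abs_nonneg A) hB)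
    set y2 := max (max x₀ 1) ((1 - A)/B) with hy2def
    have hy21 : (1:ℝ) ≤ y2 := le_trans (le_max_right x₀ 1) (le_max_left _ _)
    have hbound : ∀ y ∈ Set.Ioi y2, c * y⁻¹ ≤ v y := by
      intro y hy
      have hy' : y2 < y := hy
      have hyx₀ : x₀ ≤ y := le_trans (le_trans (le_max_left x₀ 1) (le_max_left _ _)) hy'.le
      have hy1 : 1 ≤ y := le_trans hy21 hy'.le
      have hyA : 1 ≤ A + B*y := by
        have h1 : (1 - A)/B ≤ y := le_trans (le_max_right _ _) hy'.le
        have h2 := (div_le_iff₀ hB).mp h1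
        linarith
      have hvy := hpos y hyx₀
      have h1 : v y ^ (1-q) = A + B*y := by
        rw [hAdef]
        linear_combination haff2 y hyx₀
      have h2 : v y = (A + B*y) ^ ((1-q)⁻¹) := by
        rw [← h1, ← Real.rpow_mul hvy.le, mul_inv_cancel₀ h1q0, Real.rpow_one]
      have hneg1 : (-1:ℝ) ≤ (1-q)⁻¹ := by
        have h1q : (1:ℝ)-q = -(q-1) := by ring
        rw [h1q, inv_neg]
        have h3 : (q-1)⁻¹ ≤ 1 := by
          rw [← one_div]
          exact (div_le_one (by linarith)).mpr (by linarith)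
        linarith
      have h3 : (A + B*y)⁻¹ ≤ (A+B*y) ^ ((1-q)⁻¹) := by
        have h4 := Real.rpow_le_rpow_of_exponent_le hyA hneg1
        rwa [Real.rpow_neg_one] at h4
      have h4 : A + B*y ≤ (|A| + B)*y := by
        nlinarith [le_abs_self A, mul_nonneg (sub_nonneg.mpr hy1) (abs_nonneg A)]
      have h5 : c * y⁻¹ ≤ (A + B*y)⁻¹ := by
        rw [hcdef, ← mul_inv]
        exact inv_anti₀ (by linarith) h4
      calc c*y⁻¹ ≤ (A+B*y)⁻¹ := h5
        _ ≤ (A+B*y)^((1-q)⁻¹) := h3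
        _ = v y := h2.symm
    have hy20 : (0:ℝ) < y2 := lt_of_lt_of_le one_pos hy21
    clear_value B A c y2
    have hintc : IntegrableOn (fun y => c * y⁻¹) (Set.Ioi y2) := by
      refine (hL2.mono_set (Set.Ioi_subset_Ioi hy20.le)).mono' ?_ ?_
      · refine ContinuousOn.aestronglyMeasurable ?_ measurableSet_Ioi
        intro t ht
        exact (continuousAt_const.mul
          (continuousAt_inv₀ (ne_of_gt (lt_trans hy20 ht)))).continuousWithinAt
      · rw [ae_restrict_iff' measurableSet_Ioi]
        filter_upwards with y hy
        have hy0 : (0:ℝ) < y := lt_trans hy20 hy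
        rw [Real.norm_eq_abs, abs_of_nonneg (mul_nonneg hcpos.le (inv_nonneg.mpr hy0.le))]
        exact hbound y hy
    have hinv : IntegrableOn (fun y : ℝ => y ^ (-1:ℝ)) (Set.Ioi y2) := by
      have h6 : IntegrableOn (fun y => c⁻¹ * (c * y⁻¹)) (Set.Ioi y2) :=
        hintc.const_mul c⁻¹
      refine IntegrableOn.congr_fun h6 (fun y hy => ?_) measurableSet_Ioi
      show c⁻¹ * (c * y⁻¹) = y ^ (-1:ℝ)
      rw [Real.rpow_neg_one, inv_mul_cancel_left₀ hcpos.ne']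
    have hcontra := (integrableOn_Ioi_rpow_iff hy20).mp hinv
    linarith
  have huzero : ∀ x ∈ Set.Ioi (0:ℝ), u x = 0 := by
    intro x hx
    have hvx : v x = 0 := by
      by_contra hne
      exact hposlemma x hx (lt_of_le_of_ne (sq_nonneg (u x)) (Ne.symm hne))
    exact (pow_eq_zero_iff two_ne_zero).mp hvx
  intro x hx
  rcases eq_or_lt_of_le hx with h | h
  · have h0 : Filter.Tendsto u (nhdsWithin 0 (Set.Ioi 0)) (nhds (u 0)) :=
      (hcont 0 Set.self_mem_Ici).tendsto.mono_left
        (nhdsWithin_mono 0 Set.Ioi_subset_Ici_self)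
    have h1 : Filter.Tendsto u (nhdsWithin 0 (Set.Ioi 0)) (nhds 0) := by
      refine Filter.Tendsto.congr' ?_ tendsto_const_nhds
      filter_upwards [eventually_mem_nhdsWithin] with t ht
      exact (huzero t ht).symm
    rw [← h]
    exact tendsto_nhds_unique h0 h1
  · exact huzero x h
end

section
/- Fix an integer K ≥ 1, γ < 0, and 1 < p < 5. Set ℓ = γ²/K² and, for ω ∈ (0, ℓ), b_ω = arctanh(√(ω/ℓ)) and m(ω) = K ∫₀^∞ (((p+1)ω/2)^{1/(p−1)} (sinh(((p−1)√ω/2)x + b_ω))^{−2/(p−1)})² dx. Then: (i) m(ω) is finite and strictly positive for every ω ∈ (0, ℓ); (ii) there exists μ < ∞ such that m(ω) < μ for all ω ∈ (0, ℓ); (iii) m is strictly decreasing on (0, ℓ); and (iv) m(ω) → 0 as ω → ℓ⁻. -/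
open MeasureTheory

section AuxNLS

open Set intervalIntegral Real Filter Topology

noncomputable def psi (e u : ℝ) : ℝ := (u ^ 2 - 1) ^ e
noncomputable def Phi (e s : ℝ) : ℝ := ∫ u in (1:ℝ)..s, psi e u
noncomputable def gg (e s : ℝ) : ℝ := s ^ (-(2 * e + 1)) * Phi e s




lemma psi_nonneg (e : ℝ) {u : ℝ} (hu : 1 ≤ u) : 0 ≤ psi e u :=
  Real.rpow_nonneg (by nlinarith) e

lemma psi_pos (e : ℝ) {u : ℝ} (hu : 1 < u) : 0 < psi e u :=
  Real.rpow_pos_of_pos (by nlinarith) e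

lemma continuousOn_psi (e : ℝ) : ContinuousOn (psi e) (Ioi 1) := by
  intro u hu
  have h1 : (1:ℝ) < u := hu
  have : ContinuousAt (psi e) u := by
    have hbase : ContinuousAt (fun u : ℝ => u ^ 2 - 1) u := by fun_prop
    exact hbase.rpow_const (Or.inl (by nlinarith))
  exact this.continuousWithinAt

lemma intervalIntegrable_psi {e : ℝ} (he : -1 < e) {a b : ℝ} (ha : 1 ≤ a) (hb : 1 ≤ b) :
    IntervalIntegrable (psi e) volume a b := by
  suffices H : ∀ s : ℝ, 1 ≤ s → IntervalIntegrable (psi e) volume 1 s from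
    ((H a ha).symm.trans (H b hb))
  intro s hs
  rw [intervalIntegrable_iff_integrableOn_Ioc_of_le hs]
  set C : ℝ := (2:ℝ) ^ e + (s + 1) ^ e with hC
  have hCpos : 0 < C := by positivity
  have hg : IntegrableOn (fun u : ℝ => C * (u - 1) ^ e) (Ioc 1 s) := by
    have h0 : IntervalIntegrable (fun x : ℝ => x ^ e) volume 0 (s - 1) :=
      intervalIntegral.intervalIntegrable_rpow' he
    have h1 : IntervalIntegrable (fun x : ℝ => (x - 1) ^ e) volume 1 s := by
      have := h0.comp_sub_right 1
      simpa using this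
    exact ((intervalIntegrable_iff_integrableOn_Ioc_of_le hs).mp h1).const_mul C
  refine hg.integrable.mono ?_ ?_
  · exact ((continuousOn_psi e).mono (fun u hu => hu.1)).aestronglyMeasurable measurableSet_Ioc
  · filter_upwards [ae_restrict_mem measurableSet_Ioc] with u hu
    have h1u : (1:ℝ) < u := hu.1
    have hus : u ≤ s := hu.2
    have hsplit : psi e u = (u - 1) ^ e * (u + 1) ^ e := by
      rw [psi, show u ^ 2 - 1 = (u - 1) * (u + 1) by ring,
        Real.mul_rpow (by linarith) (by linarith)]
    have hb2 : (u + 1) ^ e ≤ C := by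
      rcases le_or_gt 0 e with h0e | h0e
      · have : (u + 1) ^ e ≤ (s + 1) ^ e :=
          Real.rpow_le_rpow (by linarith) (by linarith) h0e
        have h2 : (0:ℝ) ≤ (2:ℝ) ^ e := by positivity
        linarith
      · have : (u + 1) ^ e ≤ (2:ℝ) ^ e :=
          Real.rpow_le_rpow_of_nonpos (by norm_num) (by linarith) h0e.le
        have h2 : (0:ℝ) ≤ (s + 1) ^ e := by positivity
        linarith
    have hpn : 0 ≤ psi e u := psi_nonneg e h1u.le
    have hxn : (0:ℝ) ≤ (u - 1) ^ e := Real.rpow_nonneg (by linarith) e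
    rw [Real.norm_of_nonneg hpn, Real.norm_of_nonneg (by positivity)]
    calc psi e u = (u - 1) ^ e * (u + 1) ^ e := hsplit
      _ ≤ (u - 1) ^ e * C := by nlinarith
      _ = C * (u - 1) ^ e := by ring

lemma Phi_pos {e : ℝ} (he : -1 < e) {s : ℝ} (hs : 1 < s) : 0 < Phi e s :=
  intervalIntegral.intervalIntegral_pos_of_pos_on (intervalIntegrable_psi he le_rfl hs.le)
    (fun u hu => psi_pos e hu.1) hs

lemma Phi_hasDerivAt {e : ℝ} (he : -1 < e) {s : ℝ} (hs : 1 < s) :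
    HasDerivAt (Phi e) (psi e s) s := by
  refine intervalIntegral.integral_hasDerivAt_right (intervalIntegrable_psi he le_rfl hs.le)
    ?_ ?_
  · exact (continuousOn_psi e).stronglyMeasurableAtFilter isOpen_Ioi s hs
  · have hbase : ContinuousAt (fun u : ℝ => u ^ 2 - 1) s := by fun_prop
    exact hbase.rpow_const (Or.inl (by nlinarith))

lemma Phi_continuousWithinAt {e : ℝ} (he : -1 < e) :
    ContinuousWithinAt (Phi e) (Ici 1) 1 := by
  have h := intervalIntegral.continuousOn_primitive_interval'
    (intervalIntegrable_psi he le_rfl (by norm_num : (1:ℝ) ≤ 2)) (μ := volume)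
    (a := 1) (b₁ := 1) (b₂ := 2) left_mem_uIcc
  have h1 : ContinuousWithinAt (Phi e) (uIcc (1:ℝ) 2) 1 :=
    h 1 left_mem_uIcc
  have huicc : uIcc (1:ℝ) 2 = Icc 1 2 := uIcc_of_le (by norm_num)
  rw [huicc] at h1
  -- upgrade from Icc 1 2 to Ici 1 using that Icc 1 2 is a neighborhood of 1 within Ici 1
  have : Icc (1:ℝ) 2 ∈ nhdsWithin (1:ℝ) (Ici 1) := by
    apply mem_nhdsWithin.mpr
    exact ⟨Iio 2, isOpen_Iio, by norm_num, fun x hx => ⟨hx.2, le_of_lt hx.1⟩⟩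
  exact h1.mono_of_mem_nhdsWithin this

lemma Phi_one (e : ℝ) : Phi e 1 = 0 := intervalIntegral.integral_same



lemma intervalIntegrable_psi_mul {e : ℝ} (he : -1 < e) {s : ℝ} (hs : 1 < s)
    {w : ℝ → ℝ} (hw : ContinuousOn w (Ioi 1)) {Cw : ℝ}
    (hbd : ∀ u ∈ Ioc 1 s, |w u| ≤ Cw) :
    IntervalIntegrable (fun u => psi e u * w u) volume 1 s := by
  rw [intervalIntegrable_iff_integrableOn_Ioc_of_le hs.le]
  have hCw : 0 ≤ Cw := le_trans (abs_nonneg _) (hbd ((1+s)/2) ⟨by linarith, by linarith⟩)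
  have hint : IntegrableOn (fun u => Cw * psi e u) (Ioc 1 s) :=
    ((intervalIntegrable_psi he le_rfl hs.le).1).const_mul Cw
  refine hint.integrable.mono ?_ ?_
  · exact ((continuousOn_psi e).mul hw |>.mono (fun u hu => hu.1)).aestronglyMeasurable
      measurableSet_Ioc
  · filter_upwards [ae_restrict_mem measurableSet_Ioc] with u hu
    have hpn : 0 ≤ psi e u := psi_nonneg e hu.1.le
    rw [norm_mul, norm_mul, Real.norm_of_nonneg hpn, Real.norm_of_nonneg hCw,
      Real.norm_eq_abs]
    calc psi e u * |w u| ≤ psi e u * Cw :=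
          mul_le_mul_of_nonneg_left (hbd u hu) hpn
      _ = Cw * psi e u := by ring

/-- Key inequality: `(2e+1) Φ(s) < s ψ(s)` for `s > 1`. -/
lemma key_ineq {e : ℝ} (he : -(1:ℝ)/2 < e) {s : ℝ} (hs : 1 < s) :
    (2 * e + 1) * Phi e s < s * psi e s := by
  have he1 : -1 < e := by linarith
  have he10 : (0:ℝ) < e + 1 := by linarith
  set F : ℝ → ℝ := fun u => (u ^ 2 - 1) ^ (e + 1) * u⁻¹ with hF
  -- continuity of F on [1, s]
  have hFc : ContinuousOn F (Icc 1 s) := by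
    apply ContinuousOn.mul
    · apply ContinuousOn.rpow_const
      · fun_prop
      · intro u _; exact Or.inr he10.le
    · apply ContinuousOn.inv₀ (by fun_prop)
      intro u hu; have := hu.1; positivity
  -- derivative of F
  have hFderiv : ∀ u ∈ Ioo 1 s, HasDerivAt F (psi e u * (2 * e + 1 + u⁻¹ ^ 2)) u := by
    intro u hu
    have h1u : (1:ℝ) < u := hu.1
    have hu0 : u ≠ 0 := by positivity
    have hb0 : u ^ 2 - 1 ≠ 0 := by nlinarith
    have h1 : HasDerivAt (fun u : ℝ => u ^ 2 - 1) (2 * u) u := by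
      simpa using ((hasDerivAt_pow 2 u).sub_const 1)
    have h2 := h1.rpow_const (p := e + 1) (Or.inl hb0)
    have h3 : HasDerivAt (fun u : ℝ => u⁻¹) (-(u ^ 2)⁻¹) u := by
      simpa using (hasDerivAt_inv hu0)
    have h4 := h2.mul h3
    convert h4 using 1
    · rfl
    · rfl
    · rfl
    have hrw : (u ^ 2 - 1) ^ (e + 1) = (u ^ 2 - 1) ^ e * (u ^ 2 - 1) := by
      rw [Real.rpow_add_one hb0]
    rw [show e + 1 - 1 = e by ring, hrw, psi]
    field_simp
    ring
  -- integrability of F'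
  have hw : ContinuousOn (fun u : ℝ => 2 * e + 1 + u⁻¹ ^ 2) (Ioi 1) := by
    apply ContinuousOn.add continuousOn_const
    apply ContinuousOn.pow
    apply ContinuousOn.inv₀ (by fun_prop)
    intro u hu; have : (1:ℝ) < u := hu; positivity
  have hbd : ∀ u ∈ Ioc 1 s, |2 * e + 1 + u⁻¹ ^ 2| ≤ 2 * e + 2 := by
    intro u hu
    have h1u : (1:ℝ) < u := hu.1
    have h1 : u⁻¹ ^ 2 ≤ 1 := by
      rw [inv_pow]
      apply inv_le_one_of_one_le₀; nlinarith
    have h2 : 0 < u⁻¹ ^ 2 := by positivity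
    rw [abs_of_pos (by linarith)]; linarith
  have hFint : IntervalIntegrable (fun u => psi e u * (2 * e + 1 + u⁻¹ ^ 2)) volume 1 s :=
    intervalIntegrable_psi_mul he1 hs hw hbd
  -- FTC
  have hFTC : ∫ u in (1:ℝ)..s, psi e u * (2 * e + 1 + u⁻¹ ^ 2) = F s - F 1 :=
    intervalIntegral.integral_eq_sub_of_hasDeriv_right_of_le hs.le hFc
      (fun u hu => (hFderiv u hu).hasDerivWithinAt) hFint
  have hF1 : F 1 = 0 := by
    simp [hF, Real.zero_rpow (by linarith : e + 1 ≠ 0)]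
  -- split the integral
  have hsq : IntervalIntegrable (fun u => psi e u * u⁻¹ ^ 2) volume 1 s := by
    refine intervalIntegrable_psi_mul he1 hs ?_ (Cw := 1) ?_
    · apply ContinuousOn.pow
      apply ContinuousOn.inv₀ (by fun_prop)
      intro u hu; have : (1:ℝ) < u := hu; positivity
    · intro u hu
      have h1u : (1:ℝ) < u := hu.1
      rw [abs_of_pos (by positivity), inv_pow]
      apply inv_le_one_of_one_le₀; nlinarith
  have hconst : IntervalIntegrable (fun u => psi e u * (2 * e + 1)) volume 1 s := by
    simpa [mul_comm] using (intervalIntegrable_psi he1 le_rfl hs.le).const_mul (2 * e + 1)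
  have hsplit : ∫ u in (1:ℝ)..s, psi e u * (2 * e + 1 + u⁻¹ ^ 2)
      = (∫ u in (1:ℝ)..s, psi e u * (2 * e + 1)) + ∫ u in (1:ℝ)..s, psi e u * u⁻¹ ^ 2 := by
    rw [← intervalIntegral.integral_add hconst hsq]
    congr 1; ext u; ring
  have hconst_val : ∫ u in (1:ℝ)..s, psi e u * (2 * e + 1) = (2 * e + 1) * Phi e s := by
    rw [Phi, ← intervalIntegral.integral_const_mul]
    congr 1; ext u; ring
  have hsq_pos : 0 < ∫ u in (1:ℝ)..s, psi e u * u⁻¹ ^ 2 := by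
    apply intervalIntegral.intervalIntegral_pos_of_pos_on hsq _ hs
    intro u hu
    have h1u : (1:ℝ) < u := hu.1
    have := psi_pos e h1u
    positivity
  -- conclude
  have hlt1 : (2 * e + 1) * Phi e s < F s := by
    have := hFTC
    rw [hsplit, hconst_val, hF1] at this
    linarith
  have hlt2 : F s ≤ s * psi e s := by
    have hb0 : (0:ℝ) < s ^ 2 - 1 := by nlinarith
    have hpsipos : 0 < psi e s := psi_pos e hs
    have hFs : F s = (s ^ 2 - 1) ^ (e + 1) * s⁻¹ := rfl
    have : F s = psi e s * ((s ^ 2 - 1) * s⁻¹) := by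
      rw [hFs, Real.rpow_add_one (ne_of_gt hb0), psi]; ring
    rw [this]
    have hs0 : (0:ℝ) < s := by linarith
    have h2 : (s ^ 2 - 1) * s⁻¹ ≤ s := by
      rw [mul_inv_le_iff₀ hs0]; nlinarith
    nlinarith
  linarith



lemma gg_hasDerivAt {e : ℝ} (he : -(1:ℝ)/2 < e) {s : ℝ} (hs : 1 < s) :
    HasDerivAt (gg e)
      (s ^ (-(2 * e + 1) - 1) * (s * psi e s - (2 * e + 1) * Phi e s)) s := by
  have he1 : -1 < e := by linarith
  have hs0 : (0:ℝ) < s := by linarith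
  have h1 : HasDerivAt (fun s : ℝ => s ^ (-(2 * e + 1)))
      (-(2 * e + 1) * s ^ (-(2 * e + 1) - 1)) s :=
    Real.hasDerivAt_rpow_const (Or.inl (ne_of_gt hs0))
  have h2 := h1.mul (Phi_hasDerivAt he1 hs)
  convert h2 using 1
  · rfl
  · rfl
  · rfl
  have hpow : s ^ (-(2 * e + 1)) = s ^ (-(2 * e + 1) - 1) * s := by
    rw [← Real.rpow_add_one (ne_of_gt hs0)]
    norm_num
  rw [hpow]; ring

lemma gg_strictMonoOn {e : ℝ} (he : -(1:ℝ)/2 < e) : StrictMonoOn (gg e) (Ioi 1) := by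
  have hderiv : ∀ s ∈ Ioi (1:ℝ), 0 < deriv (gg e) s := by
    intro s hs
    have hs1 : (1:ℝ) < s := hs
    rw [(gg_hasDerivAt he hs1).deriv]
    have h1 : 0 < s ^ (-(2 * e + 1) - 1) := Real.rpow_pos_of_pos (by linarith) _
    have h2 := key_ineq he hs1
    nlinarith
  apply strictMonoOn_of_deriv_pos (convex_Ioi 1)
  · intro s hs
    exact ((gg_hasDerivAt he hs).continuousAt).continuousWithinAt
  · intro s hs
    rw [interior_Ioi] at hs
    exact hderiv s hs
lemma Phi_mono {e : ℝ} (he : -1 < e) {a b : ℝ} (ha : 1 ≤ a) (hab : a ≤ b) :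
    Phi e a ≤ Phi e b := by
  have hb : (1:ℝ) ≤ b := le_trans ha hab
  have hadd : Phi e a + ∫ u in a..b, psi e u = Phi e b := by
    rw [Phi, Phi]
    exact intervalIntegral.integral_add_adjacent_intervals
      (intervalIntegrable_psi he le_rfl ha) (intervalIntegrable_psi he ha hb)
  have hnn : 0 ≤ ∫ u in a..b, psi e u := by
    apply intervalIntegral.integral_nonneg hab
    intro u hu
    exact psi_nonneg e (le_trans ha hu.1)
  linarith

lemma gg_bound {e : ℝ} (he : -(1:ℝ)/2 < e) {s : ℝ} (hs : 1 < s) :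
    gg e s ≤ Phi e 2 + max 1 ((3/4:ℝ) ^ e) / (2 * e + 1) := by
  have he1 : -1 < e := by linarith
  have h2e1 : (0:ℝ) < 2 * e + 1 := by linarith
  have hs0 : (0:ℝ) < s := by linarith
  set C : ℝ := max 1 ((3/4:ℝ) ^ e) with hC
  have hC0 : 0 < C := lt_of_lt_of_le one_pos (le_max_left _ _)
  have hsp : (0:ℝ) < s ^ (-(2 * e + 1)) := Real.rpow_pos_of_pos hs0 _
  have hsple : s ^ (-(2 * e + 1)) ≤ 1 :=
    Real.rpow_le_one_of_one_le_of_nonpos hs.le (by linarith)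
  rcases le_or_gt s 2 with h2 | h2
  · -- small s
    have h1 : Phi e s ≤ Phi e 2 := Phi_mono he1 hs.le h2
    have h0 : 0 < Phi e s := Phi_pos he1 hs
    have : gg e s ≤ Phi e s := by
      rw [gg]
      nlinarith
    have hpos : 0 ≤ C / (2 * e + 1) := by positivity
    linarith
  · -- large s
    have h21 : (1:ℝ) < 2 := one_lt_two
    have hsplit : Phi e s = Phi e 2 + ∫ u in (2:ℝ)..s, psi e u := by
      rw [Phi, Phi]
      exact (intervalIntegral.integral_add_adjacent_intervals
        (intervalIntegrable_psi he1 le_rfl h21.le)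
        (intervalIntegrable_psi he1 h21.le (by linarith))).symm
    -- pointwise bound psi ≤ C * u ^ (2 e) on [2, s]
    have hrpowint : IntervalIntegrable (fun u : ℝ => C * u ^ (2 * e)) volume 2 s :=
      ((intervalIntegral.intervalIntegrable_rpow' (by linarith)).const_mul C)
    have hmono : (∫ u in (2:ℝ)..s, psi e u) ≤ ∫ u in (2:ℝ)..s, C * u ^ (2 * e) := by
      apply intervalIntegral.integral_mono_on h2.le
        (intervalIntegrable_psi he1 h21.le (by linarith)) hrpowint
      intro u hu
      have hu2 : (2:ℝ) ≤ u := hu.1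
      have hu0 : (0:ℝ) < u := by linarith
      have huu : u ^ (2 * e) = (u ^ 2) ^ e := by
        rw [← Real.rpow_natCast u 2, ← Real.rpow_mul hu0.le]
        norm_num [mul_comm]
      rcases le_or_gt 0 e with h0e | h0e
      · have : psi e u ≤ (u ^ 2) ^ e := by
          apply Real.rpow_le_rpow (by nlinarith) (by nlinarith) h0e
        calc psi e u ≤ (u ^ 2) ^ e := this
          _ = 1 * u ^ (2 * e) := by rw [huu]; ring
          _ ≤ C * u ^ (2 * e) := by
              apply mul_le_mul_of_nonneg_right (le_max_left _ _)
              positivity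
      · have h34 : (3/4:ℝ) * u ^ 2 ≤ u ^ 2 - 1 := by nlinarith
        have : psi e u ≤ ((3/4:ℝ) * u ^ 2) ^ e :=
          Real.rpow_le_rpow_of_nonpos (by positivity) h34 h0e.le
        calc psi e u ≤ ((3/4:ℝ) * u ^ 2) ^ e := this
          _ = (3/4:ℝ) ^ e * u ^ (2 * e) := by
              rw [Real.mul_rpow (by norm_num) (by positivity), huu]
          _ ≤ C * u ^ (2 * e) := by
              apply mul_le_mul_of_nonneg_right (le_max_right _ _)
              positivity
    have hval : ∫ u in (2:ℝ)..s, C * u ^ (2 * e)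
        = C * ((s ^ (2 * e + 1) - 2 ^ (2 * e + 1)) / (2 * e + 1)) := by
      rw [intervalIntegral.integral_const_mul, integral_rpow (Or.inl (by linarith))]
    have h2pow : (0:ℝ) < (2:ℝ) ^ (2 * e + 1) := by positivity
    have hbound : (∫ u in (2:ℝ)..s, psi e u) ≤ C * s ^ (2 * e + 1) / (2 * e + 1) := by
      rw [hval] at hmono
      have hstep : (s ^ (2 * e + 1) - 2 ^ (2 * e + 1)) / (2 * e + 1)
          ≤ s ^ (2 * e + 1) / (2 * e + 1) := by
        gcongr
        linarith
      have := mul_le_mul_of_nonneg_left hstep hC0.le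
      calc (∫ u in (2:ℝ)..s, psi e u)
          ≤ C * ((s ^ (2 * e + 1) - 2 ^ (2 * e + 1)) / (2 * e + 1)) := hmono
        _ ≤ C * (s ^ (2 * e + 1) / (2 * e + 1)) := this
        _ = C * s ^ (2 * e + 1) / (2 * e + 1) := by ring
    have hcancel : s ^ (-(2 * e + 1)) * s ^ (2 * e + 1) = 1 := by
      rw [← Real.rpow_add hs0, show -(2 * e + 1) + (2 * e + 1) = 0 by ring, Real.rpow_zero]
    have hPhi2 : 0 < Phi e 2 := Phi_pos he1 h21
    calc gg e s = s ^ (-(2 * e + 1)) * (Phi e 2 + ∫ u in (2:ℝ)..s, psi e u) := by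
          rw [gg, hsplit]
      _ ≤ 1 * Phi e 2 + s ^ (-(2 * e + 1)) * (C * s ^ (2 * e + 1) / (2 * e + 1)) := by
          have hin : 0 ≤ ∫ u in (2:ℝ)..s, psi e u := by
            apply intervalIntegral.integral_nonneg h2.le
            intro u hu
            exact psi_nonneg e (by linarith [hu.1])
          nlinarith
      _ = Phi e 2 + C / (2 * e + 1) := by
          rw [one_mul]
          congr 1
          rw [show s ^ (-(2 * e + 1)) * (C * s ^ (2 * e + 1) / (2 * e + 1))
              = s ^ (-(2 * e + 1)) * s ^ (2 * e + 1) * C / (2 * e + 1) by ring, hcancel,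
            one_mul]



lemma arctanh_pos_s18 {y : ℝ} (hy0 : 0 < y) (hy1 : y < 1) : 0 < arctanh y := by
  have h1 : (1:ℝ) < (1 + y) / (1 - y) := by
    rw [lt_div_iff₀ (by linarith)]; linarith
  have := Real.log_pos h1
  unfold arctanh; linarith

lemma coth_arctanh {y : ℝ} (hy0 : 0 < y) (hy1 : y < 1) :
    Real.cosh (arctanh y) / Real.sinh (arctanh y) = y⁻¹ := by
  set t := arctanh y with ht
  have htpos : 0 < t := arctanh_pos_s18 hy0 hy1
  have hz : (0:ℝ) < (1 + y) / (1 - y) := div_pos (by linarith) (by linarith)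
  have hy' : (1:ℝ) - y ≠ 0 := by linarith
  have hE2 : Real.exp t * Real.exp t * (1 - y) = 1 + y := by
    have h2t : Real.exp t * Real.exp t = (1 + y) / (1 - y) := by
      rw [← Real.exp_add]
      have : t + t = Real.log ((1 + y) / (1 - y)) := by rw [ht, arctanh]; ring
      rw [this, Real.exp_log hz]
    rw [h2t]; field_simp
  have hsinhpos : 0 < Real.sinh t := Real.sinh_pos_iff.mpr htpos
  have hsinh : Real.sinh t ≠ 0 := ne_of_gt hsinhpos
  have hEne : Real.exp t ≠ 0 := (Real.exp_pos t).ne'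
  have hkey : y * Real.cosh t = Real.sinh t := by
    rw [Real.cosh_eq, Real.sinh_eq, Real.exp_neg]
    field_simp
    nlinarith [hE2]
  field_simp [hy0.ne']
  linarith [hkey]

lemma coth_gt_one {t : ℝ} (ht : 0 < t) : 1 < Real.cosh t / Real.sinh t := by
  have hs : 0 < Real.sinh t := Real.sinh_pos_iff.mpr ht
  rw [lt_div_iff₀ hs, one_mul]
  exact Real.sinh_lt_cosh t

lemma coth_sq_sub_one {t : ℝ} (ht : 0 < t) :
    (Real.cosh t / Real.sinh t) ^ 2 - 1 = (Real.sinh t ^ 2)⁻¹ := by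
  have hs : Real.sinh t ≠ 0 := ne_of_gt (Real.sinh_pos_iff.mpr ht)
  have h := Real.cosh_sq_sub_sinh_sq t
  field_simp
  exact h

lemma tendsto_coth_atTop : Tendsto (fun t => Real.cosh t / Real.sinh t) atTop (𝓝 1) := by
  have hsinh : Tendsto Real.sinh atTop atTop := by
    have h1 : Tendsto (fun t : ℝ => (Real.exp t - Real.exp (-t)) / 2) atTop atTop := by
      apply Tendsto.atTop_div_const (by norm_num)
      apply Filter.Tendsto.atTop_add Real.tendsto_exp_atTop
      simpa using (Real.tendsto_exp_neg_atTop_nhds_zero.neg)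
    exact h1.congr fun t => (Real.sinh_eq t).symm
  have hmain : Tendsto (fun t : ℝ => 1 + Real.exp (-t) * (Real.sinh t)⁻¹) atTop (𝓝 1) := by
    have h0 : Tendsto (fun t : ℝ => Real.exp (-t) * (Real.sinh t)⁻¹) atTop (𝓝 0) := by
      have := Real.tendsto_exp_neg_atTop_nhds_zero.mul hsinh.inv_tendsto_atTop
      simpa using this
    simpa using (tendsto_const_nhds.add h0)
  apply hmain.congr'
  filter_upwards [eventually_gt_atTop (0:ℝ)] with t ht
  have hs : Real.sinh t ≠ 0 := ne_of_gt (Real.sinh_pos_iff.mpr ht)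
  have hc : Real.cosh t = Real.sinh t + Real.exp (-t) := by
    have := Real.cosh_sub_sinh t; linarith
  rw [hc]
  field_simp



lemma main_integral {e : ℝ} (he : -(1:ℝ)/2 < e) {A c b s : ℝ}
    (hA : 0 < A) (hc : 0 < c) (hb : 0 < b)
    (hs : Real.cosh b / Real.sinh b = s) :
    IntegrableOn (fun x => (A * Real.sinh (c * x + b) ^ (-(e + 1))) ^ 2) (Ioi 0) ∧
      ∫ x in Ioi 0, (A * Real.sinh (c * x + b) ^ (-(e + 1))) ^ 2 = A ^ 2 / c * Phi e s := by
  have he1 : (-1:ℝ) < e := by linarith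
  have hs1 : 1 < s := hs ▸ coth_gt_one hb
  set w : ℝ → ℝ := fun x => Real.cosh (c * x + b) / Real.sinh (c * x + b) with hwdef
  set H : ℝ → ℝ := fun x => A ^ 2 / c * (Phi e s - Phi e (w x)) with hHdef
  -- derivative
  have hderiv : ∀ x ∈ Ioi (0:ℝ),
      HasDerivAt H ((A * Real.sinh (c * x + b) ^ (-(e + 1))) ^ 2) x := by
    intro x hx
    have hx0 : (0:ℝ) < x := hx
    have ht : 0 < c * x + b := by positivity
    set t := c * x + b with htdef
    have hSpos : 0 < Real.sinh t := Real.sinh_pos_iff.mpr ht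
    have hSne : Real.sinh t ≠ 0 := ne_of_gt hSpos
    have hu1 : 1 < w x := coth_gt_one ht
    have hlin : HasDerivAt (fun x : ℝ => c * x + b) c x := by
      simpa using ((hasDerivAt_id x).const_mul c).add_const b
    have hsinh : HasDerivAt (fun x : ℝ => Real.sinh (c * x + b)) (Real.cosh t * c) x :=
      hlin.sinh
    have hcosh : HasDerivAt (fun x : ℝ => Real.cosh (c * x + b)) (Real.sinh t * c) x :=
      hlin.cosh
    have hw : HasDerivAt w
        ((Real.sinh t * c * Real.sinh t - Real.cosh t * (Real.cosh t * c)) /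
          Real.sinh t ^ 2) x := hcosh.div hsinh hSne
    have hwval : (Real.sinh t * c * Real.sinh t - Real.cosh t * (Real.cosh t * c)) /
        Real.sinh t ^ 2 = -c / Real.sinh t ^ 2 := by
      have hid := Real.cosh_sq_sub_sinh_sq t
      field_simp
      nlinarith [hid]
    rw [hwval] at hw
    have hPhiw : HasDerivAt (fun x => Phi e (w x))
        (psi e (w x) * (-c / Real.sinh t ^ 2)) x :=
      (Phi_hasDerivAt he1 hu1).comp x hw
    have hH : HasDerivAt H (A ^ 2 / c * (0 - psi e (w x) * (-c / Real.sinh t ^ 2))) x :=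
      ((hasDerivAt_const x (Phi e s)).sub hPhiw).const_mul (A ^ 2 / c)
    convert hH using 1
    -- now the value computation
    have hpsiw : psi e (w x) = Real.sinh t ^ ((-2:ℝ) * e) := by
      rw [psi, coth_sq_sub_one ht]
      have h1 : (Real.sinh t ^ 2)⁻¹ = Real.sinh t ^ ((-2:ℝ)) := by
        rw [show ((-2:ℝ)) = -(2:ℝ) by norm_num, Real.rpow_neg hSpos.le]
        norm_num [Real.rpow_two]
      rw [h1, ← Real.rpow_mul hSpos.le]
    have hsq : (Real.sinh t ^ (-(e + 1))) ^ 2 = Real.sinh t ^ ((-2:ℝ) * e) *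
        (Real.sinh t ^ 2)⁻¹ := by
      rw [sq, ← Real.rpow_add hSpos, show -(e+1) + -(e+1) = (-2:ℝ)*e + (-2:ℝ) by ring,
        Real.rpow_add hSpos]
      congr 1
      rw [show ((-2:ℝ)) = -(2:ℝ) by norm_num, Real.rpow_neg hSpos.le, Real.rpow_two]
    rw [mul_pow, hsq, hpsiw]
    field_simp
    ring
  -- continuity at 0
  have hw0 : w 0 = s := by
    show Real.cosh (c * 0 + b) / Real.sinh (c * 0 + b) = s
    rw [mul_zero, zero_add, hs]
  have hcont : ContinuousWithinAt H (Ici 0) 0 := by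
    apply ContinuousAt.continuousWithinAt
    have hb0 : Real.sinh (c * 0 + b) ≠ 0 := by
      have : 0 < c * 0 + b := by simpa using hb
      exact ne_of_gt (Real.sinh_pos_iff.mpr this)
    have hwc : ContinuousAt w 0 := by
      apply ContinuousAt.div
      · fun_prop
      · fun_prop
      · exact hb0
    have hPc : ContinuousAt (Phi e) (w 0) := by
      rw [hw0]; exact (Phi_hasDerivAt he1 hs1).continuousAt
    exact (continuousAt_const.sub (hPc.comp hwc)).const_mul _
  -- limit at infinity
  have htop : Tendsto H atTop (𝓝 (A ^ 2 / c * (Phi e s - 0))) := by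
    have hlin : Tendsto (fun x : ℝ => c * x + b) atTop atTop := by
      apply Filter.tendsto_atTop_add_const_right
      exact Tendsto.const_mul_atTop hc tendsto_id
    have hwt : Tendsto w atTop (𝓝 1) := tendsto_coth_atTop.comp hlin
    have hev : ∀ᶠ x : ℝ in atTop, w x ∈ Ici (1:ℝ) := by
      filter_upwards [eventually_gt_atTop (0:ℝ)] with x hx
      exact le_of_lt (coth_gt_one (by positivity))
    have hΦ0 : Tendsto (fun x => Phi e (w x)) atTop (𝓝 0) := by
      rw [← Phi_one e]
      exact (Phi_continuousWithinAt he1).tendsto.comp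
        (tendsto_nhdsWithin_of_tendsto_nhds_of_eventually_within _ hwt hev)
    exact (tendsto_const_nhds.sub hΦ0).const_mul _
  have hnonneg : ∀ x ∈ Ioi (0:ℝ), 0 ≤ (A * Real.sinh (c * x + b) ^ (-(e + 1))) ^ 2 :=
    fun x _ => sq_nonneg _
  have hint := integrableOn_Ioi_deriv_of_nonneg hcont hderiv hnonneg htop
  refine ⟨hint, ?_⟩
  have hval := integral_Ioi_of_hasDerivAt_of_nonneg hcont hderiv hnonneg htop
  rw [hval, hHdef]
  simp [hw0]

end AuxNLS

open Set Real Filter Topology in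
/-- Subcritical mass of the ground-state branch: for `1 < p < 5`, the squared `L²` norm
`m(ω)` of the explicit ground state on the star graph is finite, positive, bounded above
by some `μ < ∞`, strictly decreasing on `(0, ℓ)` with `ℓ = γ²/K²`, and tends to `0` as
`ω → ℓ⁻`. -/
theorem subcritical_mass_branch (K : ℕ) (hK : 1 ≤ K) (γ p : ℝ)
    (hγ : γ < 0) (hp1 : 1 < p) (hp5 : p < 5)
    (ℓ : ℝ) (hℓ : ℓ = γ ^ 2 / (K : ℝ) ^ 2)
    (m : ℝ → ℝ)
    (hm : ∀ ω ∈ Set.Ioo (0:ℝ) ℓ, m ω = (K : ℝ) *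
      ∫ x in Set.Ioi (0:ℝ),
        (((p + 1) * ω / 2) ^ (1 / (p - 1)) *
          (Real.sinh ((p - 1) * Real.sqrt ω / 2 * x +
            arctanh (Real.sqrt (ω / ℓ)))) ^ (-2 / (p - 1))) ^ 2) :
    (∀ ω ∈ Set.Ioo (0:ℝ) ℓ,
      IntegrableOn (fun x =>
        (((p + 1) * ω / 2) ^ (1 / (p - 1)) *
          (Real.sinh ((p - 1) * Real.sqrt ω / 2 * x +
            arctanh (Real.sqrt (ω / ℓ)))) ^ (-2 / (p - 1))) ^ 2) (Set.Ioi 0) ∧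
      0 < m ω) ∧
    (∃ μ : ℝ, ∀ ω ∈ Set.Ioo (0:ℝ) ℓ, m ω < μ) ∧
    StrictAntiOn m (Set.Ioo 0 ℓ) ∧
    Filter.Tendsto m (nhdsWithin ℓ (Set.Iio ℓ)) (nhds 0) := by
  have hp1' : (0:ℝ) < p - 1 := by linarith
  set e : ℝ := (3 - p) / (p - 1) with hedef
  have he : -(1:ℝ)/2 < e := by
    rw [hedef, lt_div_iff₀ hp1']; linarith
  have he1 : (-1:ℝ) < e := by linarith
  have hexp : -2 / (p - 1) = -(e + 1) := by
    rw [hedef]; field_simp; ring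
  have hK1 : (1:ℝ) ≤ (K:ℝ) := by exact_mod_cast hK
  have hKpos : (0:ℝ) < (K:ℝ) := lt_of_lt_of_le one_pos hK1
  have hγ2 : (0:ℝ) < γ ^ 2 := by nlinarith
  have hℓpos : 0 < ℓ := hℓ ▸ div_pos hγ2 (by positivity)
  set Cp : ℝ := ((p + 1) / 2) ^ (e + 1) * (2 / (p - 1)) with hCpdef
  have hCp : 0 < Cp := by
    apply mul_pos (Real.rpow_pos_of_pos (by linarith) _)
    positivity
  set D : ℝ := (K:ℝ) * Cp * ℓ ^ (e + 1/2) with hDdef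
  have hD : 0 < D := by
    apply mul_pos (mul_pos hKpos hCp)
    exact Real.rpow_pos_of_pos hℓpos _
  -- main per-ω computation
  have main : ∀ ω ∈ Set.Ioo (0:ℝ) ℓ,
      IntegrableOn (fun x =>
        (((p + 1) * ω / 2) ^ (1 / (p - 1)) *
          (Real.sinh ((p - 1) * Real.sqrt ω / 2 * x +
            arctanh (Real.sqrt (ω / ℓ)))) ^ (-2 / (p - 1))) ^ 2) (Set.Ioi 0) ∧
      m ω = (K:ℝ) * Cp * ω ^ (e + 1/2) * Phi e (Real.sqrt (ℓ/ω)) ∧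
      1 < Real.sqrt (ℓ/ω) ∧
      m ω = D * gg e (Real.sqrt (ℓ/ω)) := by
    intro ω hω
    obtain ⟨hω0, hωℓ⟩ := hω
    set y := Real.sqrt (ω/ℓ) with hydef
    have hy0 : 0 < y := Real.sqrt_pos.mpr (div_pos hω0 hℓpos)
    have hy1 : y < 1 := by
      rw [hydef, show (1:ℝ) = Real.sqrt 1 by simp]
      apply Real.sqrt_lt_sqrt (by positivity)
      rw [div_lt_one hℓpos]; exact hωℓ
    set s := Real.sqrt (ℓ/ω) with hsdef
    have hs0 : 0 < s := Real.sqrt_pos.mpr (div_pos hℓpos hω0)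
    have hsy : s * y = 1 := by
      rw [hsdef, hydef, ← Real.sqrt_mul (le_of_lt (div_pos hℓpos hω0))]
      rw [show ℓ/ω * (ω/ℓ) = 1 by field_simp]
      simp
    have hs1 : 1 < s := by nlinarith
    have hbpos : 0 < arctanh y := arctanh_pos_s18 hy0 hy1
    have hcoth : Real.cosh (arctanh y) / Real.sinh (arctanh y) = s := by
      rw [coth_arctanh hy0 hy1]
      have : s = y⁻¹ := eq_inv_of_mul_eq_one_left hsy
      rw [this]
    have hbase : (0:ℝ) < (p + 1) * ω / 2 := by
      have : (0:ℝ) < p + 1 := by linarith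
      positivity
    set A := ((p + 1) * ω / 2) ^ (1/(p-1)) with hAdef
    have hA : 0 < A := Real.rpow_pos_of_pos hbase _
    have hsqrtω : 0 < Real.sqrt ω := Real.sqrt_pos.mpr hω0
    set c := (p - 1) * Real.sqrt ω / 2 with hcdef
    have hc : 0 < c := by positivity
    have hmi := main_integral he hA hc hbpos hcoth
    have hAc : A ^ 2 / c = Cp * ω ^ (e + 1/2) := by
      have hA2 : A ^ 2 = ((p + 1) / 2) ^ (e + 1) * ω ^ (e + 1) := by
        rw [hAdef, sq, ← Real.rpow_add hbase,
          show 1/(p-1) + 1/(p-1) = e + 1 by rw [hedef]; field_simp; ring,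
          show (p + 1) * ω / 2 = ((p + 1)/2) * ω by ring,
          Real.mul_rpow (by linarith) hω0.le]
      rw [hA2, hcdef, hCpdef]
      rw [show Real.sqrt ω = ω ^ ((1:ℝ)/2) from Real.sqrt_eq_rpow ω]
      rw [show ω ^ (e + 1/2) = ω ^ (e+1) / ω ^ ((1:ℝ)/2) by
        rw [← Real.rpow_sub hω0, show e + 1 - (1:ℝ)/2 = e + 1/2 by ring]]
      have hω12 : (0:ℝ) < ω ^ ((1:ℝ)/2) := Real.rpow_pos_of_pos hω0 _
      field_simp
    have hmval : m ω = (K:ℝ) * Cp * ω ^ (e + 1/2) * Phi e s := by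
      rw [hm ω ⟨hω0, hωℓ⟩]
      have h2 := hmi.2
      simp only [hexp]
      rw [← hAdef, ← hcdef]  -- align
      rw [h2, hAc]; ring
    refine ⟨?_, hmval, hs1, ?_⟩
    · simp only [hexp]
      exact hmi.1
    · -- second form
      have hs2 : s ^ (2:ℕ) = ℓ / ω := Real.sq_sqrt (le_of_lt (div_pos hℓpos hω0))
      have hωs : ω = ℓ / s ^ (2:ℕ) := by
        rw [hs2]; field_simp
      have hpow : ω ^ (e + 1/2) = ℓ ^ (e + 1/2) * s ^ (-(2*e+1)) := by
        have h1 : ((s ^ (2:ℕ) : ℝ))⁻¹ = s ^ ((-2:ℝ)) := by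
          rw [← Real.rpow_natCast s 2, ← Real.rpow_neg hs0.le]
          norm_num
        rw [hωs, div_eq_mul_inv, Real.mul_rpow hℓpos.le (by positivity), h1,
          ← Real.rpow_mul hs0.le, show (-2:ℝ) * (e + 1/2) = -(2*e+1) by ring]
      rw [hmval, hpow, hDdef, gg]
      ring
  refine ⟨?_, ?_, ?_, ?_⟩
  · -- part (i)
    intro ω hω
    obtain ⟨hint, hval, hs1, -⟩ := main ω hω
    refine ⟨hint, ?_⟩
    rw [hval]
    have h1 : 0 < ω ^ (e + 1/2) := Real.rpow_pos_of_pos hω.1 _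
    have h2 : 0 < Phi e (Real.sqrt (ℓ/ω)) := Phi_pos he1 hs1
    positivity
  · -- part (ii)
    refine ⟨D * (Phi e 2 + max 1 ((3/4:ℝ) ^ e) / (2 * e + 1)) + 1, ?_⟩
    intro ω hω
    obtain ⟨-, -, hs1, hval⟩ := main ω hω
    have hb := gg_bound he hs1
    have := mul_le_mul_of_nonneg_left hb hD.le
    rw [hval]
    linarith
  · -- part (iii)
    intro ω₁ h₁ ω₂ h₂ hlt
    obtain ⟨-, -, hs11, hval1⟩ := main ω₁ h₁
    obtain ⟨-, -, hs12, hval2⟩ := main ω₂ h₂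
    rw [hval1, hval2]
    apply mul_lt_mul_of_pos_left _ hD
    apply gg_strictMonoOn he hs12 hs11
    apply Real.sqrt_lt_sqrt (le_of_lt (div_pos hℓpos h₂.1))
    exact div_lt_div_of_pos_left hℓpos h₁.1 hlt
  · -- part (iv)
    have hev : Set.Ioo (0:ℝ) ℓ ∈ 𝓝[<] ℓ := Ioo_mem_nhdsLT_of_mem ⟨hℓpos, le_refl ℓ⟩
    have hT1 : Tendsto (fun ω : ℝ => (K:ℝ) * Cp * ω ^ (e + 1/2)) (𝓝[<] ℓ)
        (𝓝 ((K:ℝ) * Cp * ℓ ^ (e + 1/2))) := by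
      apply Tendsto.const_mul
      exact ((Real.continuousAt_rpow_const ℓ _ (Or.inl hℓpos.ne')).tendsto).mono_left
        nhdsWithin_le_nhds
    have hinner : Tendsto (fun ω : ℝ => Real.sqrt (ℓ/ω)) (𝓝[<] ℓ) (𝓝 1) := by
      have hc : ContinuousAt (fun ω : ℝ => Real.sqrt (ℓ/ω)) ℓ := by
        apply Real.continuous_sqrt.continuousAt.comp
        exact continuousAt_const.div continuousAt_id hℓpos.ne'
      have : Real.sqrt (ℓ/ℓ) = 1 := by
        rw [div_self hℓpos.ne']; simp
      have := hc.tendsto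
      rw [show ℓ/ℓ = 1 by field_simp] at this
      simpa using this.mono_left nhdsWithin_le_nhds
    have hevIci : ∀ᶠ ω in 𝓝[<] ℓ, Real.sqrt (ℓ/ω) ∈ Ici (1:ℝ) := by
      filter_upwards [hev] with ω hω
      exact le_of_lt (main ω hω).2.2.1
    have hT2 : Tendsto (fun ω : ℝ => Phi e (Real.sqrt (ℓ/ω))) (𝓝[<] ℓ) (𝓝 0) := by
      rw [← Phi_one e]
      exact (Phi_continuousWithinAt he1).tendsto.comp
        (tendsto_nhdsWithin_of_tendsto_nhds_of_eventually_within _ hinner hevIci)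
    have hT : Tendsto (fun ω : ℝ => (K:ℝ) * Cp * ω ^ (e + 1/2) * Phi e (Real.sqrt (ℓ/ω)))
        (𝓝[<] ℓ) (𝓝 0) := by
      have := hT1.mul hT2
      simpa using this
    apply hT.congr'
    filter_upwards [hev] with ω hω
    exact ((main ω hω).2.1).symm
end

section
/- Fix an integer K ≥ 1, γ < 0, and p ≥ 5. Set ℓ = γ²/K² and, for ω ∈ (0, ℓ), b_ω = arctanh(√(ω/ℓ)) and m(ω) = K ∫₀^∞ (((p+1)ω/2)^{1/(p−1)} (sinh(((p−1)√ω/2)x + b_ω))^{−2/(p−1)})² dx. Then: (i) m(ω) is finite and strictly positive for every ω ∈ (0, ℓ); (ii) m is strictly decreasing on (0, ℓ); (iii) m(ω) → 0 as ω → ℓ⁻; and (iv) m(ω) → +∞ as ω → 0⁺. In particular, m takes every value in (0, ∞). -/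
open MeasureTheory

namespace SMB

open Set Filter

/-- the profile function -/
noncomputable def g (α t : ℝ) : ℝ := Real.sinh t ^ (-α)

/-- tail integral -/
noncomputable def F (α b : ℝ) : ℝ := ∫ t in Set.Ioi b, g α t

lemma sinh_lower {b t : ℝ} (hb : 0 < b) (ht : b ≤ t) :
    (1 - Real.exp (-2 * b)) / 2 * Real.exp t ≤ Real.sinh t := by
  rw [Real.sinh_eq]
  have h1 : Real.exp (-t) = Real.exp t * Real.exp (-2 * t) := by
    rw [← Real.exp_add]; ring_nf
  have h2 : Real.exp (-2 * t) ≤ Real.exp (-2 * b) := Real.exp_le_exp.2 (by linarith)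
  nlinarith [Real.exp_pos t]

lemma g_pos {α t : ℝ} (ht : 0 < t) : 0 < g α t :=
  Real.rpow_pos_of_pos (by rwa [Real.sinh_pos_iff]) _

lemma g_nonneg {α t : ℝ} (ht : 0 < t) : 0 ≤ g α t := (g_pos ht).le

lemma g_contOn (α : ℝ) : ContinuousOn (g α) (Set.Ioi 0) := by
  intro t ht
  exact ((Real.continuousAt_rpow_const _ _
    (Or.inl (ne_of_gt (Real.sinh_pos_iff.2 ht)))).comp
    Real.continuous_sinh.continuousAt).continuousWithinAt

lemma g_le {α b t : ℝ} (hα : 0 < α) (hb : 0 < b) (ht : b ≤ t) :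
    g α t ≤ ((1 - Real.exp (-2 * b)) / 2) ^ (-α) * Real.exp (-α * t) := by
  set c := (1 - Real.exp (-2 * b)) / 2 with hc
  have hcpos : 0 < c := by
    have : Real.exp (-2 * b) < 1 := Real.exp_lt_one_iff.2 (by nlinarith)
    simp only [hc]; linarith
  have hle : c * Real.exp t ≤ Real.sinh t := sinh_lower hb ht
  have h0 : 0 < c * Real.exp t := mul_pos hcpos (Real.exp_pos t)
  have h1 : g α t ≤ (c * Real.exp t) ^ (-α) :=
    Real.rpow_le_rpow_of_nonpos h0 hle (by linarith)
  refine h1.trans_eq ?_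
  rw [Real.mul_rpow hcpos.le (Real.exp_pos t).le]
  congr 1
  rw [Real.rpow_def_of_pos (Real.exp_pos t), Real.log_exp]
  ring_nf

lemma g_integrableOn {α b : ℝ} (hα : 0 < α) (hb : 0 < b) :
    IntegrableOn (g α) (Set.Ioi b) := by
  have hmeas : AEStronglyMeasurable (g α) (volume.restrict (Set.Ioi b)) :=
    ((g_contOn α).mono (Set.Ioi_subset_Ioi hb.le)).aestronglyMeasurable measurableSet_Ioi
  refine Integrable.mono' (((exp_neg_integrableOn_Ioi b hα).const_mul
    (((1 - Real.exp (-2 * b)) / 2) ^ (-α)))) hmeas ?_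
  rw [ae_restrict_iff' measurableSet_Ioi]
  filter_upwards with t ht
  have h0 : (0:ℝ) < t := hb.trans ht
  rw [Real.norm_eq_abs, abs_of_nonneg (g_nonneg h0)]
  exact g_le hα hb (le_of_lt ht)

lemma F_split {α b₁ b₂ : ℝ} (hα : 0 < α) (hb₁ : 0 < b₁) (h12 : b₁ ≤ b₂) :
    F α b₁ = (∫ t in Set.Ioc b₁ b₂, g α t) + F α b₂ := by
  rw [F, F, ← Set.Ioc_union_Ioi_eq_Ioi h12,
    setIntegral_union (Set.Ioc_disjoint_Ioi le_rfl) measurableSet_Ioi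
      ((g_integrableOn hα hb₁).mono_set Set.Ioc_subset_Ioi_self)
      ((g_integrableOn hα (hb₁.trans_le h12)))]

lemma F_nonneg {α b : ℝ} (hb : 0 < b) : 0 ≤ F α b :=
  setIntegral_nonneg measurableSet_Ioi fun t ht => g_nonneg (hb.trans ht)

lemma integral_Ioc_g_pos {α b₁ b₂ : ℝ} (hα : 0 < α) (hb₁ : 0 < b₁) (h12 : b₁ < b₂) :
    0 < ∫ t in Set.Ioc b₁ b₂, g α t := by
  rw [← intervalIntegral.integral_of_le h12.le]
  apply intervalIntegral.intervalIntegral_pos_of_pos_on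
  · rw [intervalIntegrable_iff_integrableOn_Ioc_of_le h12.le]
    exact (g_integrableOn hα hb₁).mono_set Set.Ioc_subset_Ioi_self
  · exact fun t ht => g_pos (hb₁.trans ht.1)
  · exact h12

lemma F_pos {α b : ℝ} (hα : 0 < α) (hb : 0 < b) : 0 < F α b := by
  have h := F_split hα hb (le_of_lt (lt_add_one b))
  have h1 := integral_Ioc_g_pos hα hb (lt_add_one b)
  have h2 := F_nonneg (α := α) (b := b + 1) (by linarith)
  linarith

lemma F_lt {α b₁ b₂ : ℝ} (hα : 0 < α) (hb₁ : 0 < b₁) (h12 : b₁ < b₂) :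
    F α b₂ < F α b₁ := by
  have h := F_split hα hb₁ h12.le
  have h1 := integral_Ioc_g_pos hα hb₁ h12
  linarith

lemma F_le {α b₁ b₂ : ℝ} (hα : 0 < α) (hb₁ : 0 < b₁) (h12 : b₁ ≤ b₂) :
    F α b₂ ≤ F α b₁ := by
  have h := F_split hα hb₁ h12
  have h1 : 0 ≤ ∫ t in Set.Ioc b₁ b₂, g α t :=
    setIntegral_nonneg measurableSet_Ioc fun t ht => g_nonneg (hb₁.trans ht.1)
  linarith

lemma F_tendsto_zero {α : ℝ} (hα : 0 < α) :
    Filter.Tendsto (F α) Filter.atTop (nhds 0) := by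
  have hmono : Monotone fun b : ℝ => Set.Ioc (1:ℝ) b := fun b b' h =>
    Set.Ioc_subset_Ioc_right h
  have hint : IntegrableOn (g α) (⋃ b : ℝ, Set.Ioc (1:ℝ) b) := by
    rw [Set.iUnion_Ioc_right]; exact g_integrableOn hα one_pos
  have h1 : Filter.Tendsto (fun b : ℝ => ∫ t in Set.Ioc (1:ℝ) b, g α t) Filter.atTop
      (nhds (∫ t in ⋃ b : ℝ, Set.Ioc (1:ℝ) b, g α t)) :=
    tendsto_setIntegral_of_monotone (fun b => measurableSet_Ioc) hmono hint
  rw [Set.iUnion_Ioc_right] at h1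
  have h2 : Filter.Tendsto (fun b : ℝ => F α 1 - ∫ t in Set.Ioc (1:ℝ) b, g α t)
      Filter.atTop (nhds (F α 1 - ∫ t in Set.Ioi (1:ℝ), g α t)) := tendsto_const_nhds.sub h1
  have h3 : F α 1 - ∫ t in Set.Ioi (1:ℝ), g α t = 0 := by rw [F]; ring
  rw [h3] at h2
  refine h2.congr' ?_
  filter_upwards [Filter.eventually_ge_atTop (1:ℝ)] with b hb
  rw [F_split hα one_pos hb]; ring

lemma F_continuousOn {α : ℝ} (hα : 0 < α) : ContinuousOn (F α) (Set.Ioi 0) := by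
  intro b₀ hb₀
  simp only [Set.mem_Ioi] at hb₀
  apply ContinuousAt.continuousWithinAt
  have hsub : Set.uIcc (b₀/2) (b₀+1) ⊆ Set.Ioi 0 := by
    rw [Set.uIcc_of_le (by linarith)]
    intro x hx
    exact lt_of_lt_of_le (by linarith) hx.1
  have hint : IntegrableOn (g α) (Set.uIcc (b₀/2) (b₀+1)) := by
    have h' : Set.Icc (b₀/2) (b₀+1) ⊆ Set.Ioi 0 := by
      rw [Set.uIcc_of_le (by linarith)] at hsub; exact hsub
    rw [Set.uIcc_of_le (by linarith)]
    exact ((g_contOn α).mono h').integrableOn_Icc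
  have hprim : ContinuousOn (fun x => ∫ t in (b₀/2)..x, g α t)
      (Set.uIcc (b₀/2) (b₀+1)) :=
    intervalIntegral.continuousOn_primitive_interval hint
  have hca : ContinuousAt (fun x => F α (b₀/2) - ∫ t in (b₀/2)..x, g α t) b₀ :=
    continuousAt_const.sub (hprim.continuousAt (by
      rw [Set.uIcc_of_le (by linarith)]
      exact Icc_mem_nhds (by linarith) (by linarith)))
  refine hca.congr ?_
  filter_upwards [Ioo_mem_nhds (show b₀/2 < b₀ by linarith) (lt_add_one b₀)] with x hx
  rw [F_split hα (show (0:ℝ) < b₀/2 by linarith) (le_of_lt hx.1),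
    intervalIntegral.integral_of_le (le_of_lt hx.1)]
  ring

lemma sinh_le_three_mul {t : ℝ} (h0 : 0 < t) (h1 : t ≤ 1) :
    Real.sinh t ≤ 3 * t := by
  have key : Real.sinh t ≤ t * Real.exp t := by
    rw [Real.sinh_eq]
    have h2 : Real.exp (-t) = Real.exp t * Real.exp (-2 * t) := by
      rw [← Real.exp_add]; ring_nf
    have h3 := Real.add_one_le_exp (-2 * t)
    nlinarith [Real.exp_pos t]
  have h4 : Real.exp t ≤ Real.exp 1 := Real.exp_le_exp.2 h1
  have h5 : Real.exp 1 < 3 := by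
    have := Real.exp_one_lt_d9; linarith
  nlinarith

lemma F_one_lb {b : ℝ} (h0 : 0 < b) (h1 : b ≤ 1) :
    -(Real.log b) / 3 ≤ F 1 b := by
  have hsplit := F_split one_pos h0 h1
  have hF1 : 0 ≤ F 1 1 := F_nonneg one_pos
  have hmono : ∫ t in Set.Ioc b 1, (3 * t)⁻¹ ≤ ∫ t in Set.Ioc b 1, g 1 t := by
    apply setIntegral_mono_on
    · refine (ContinuousOn.integrableOn_Icc ?_).mono_set Set.Ioc_subset_Icc_self
      intro t ht
      exact ((continuous_const.mul continuous_id).continuousAt).continuousWithinAt.inv₀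
        (by have h2 : 0 < t := lt_of_lt_of_le h0 ht.1; exact mul_ne_zero three_ne_zero h2.ne')
    · exact ((g_contOn 1).mono (fun t ht => lt_of_lt_of_le h0 ht.1 :
        Set.Icc b 1 ⊆ Set.Ioi 0)).integrableOn_Icc.mono_set Set.Ioc_subset_Icc_self
    · exact measurableSet_Ioc
    · intro t ht
      have htp : 0 < t := h0.trans ht.1
      have hs : 0 < Real.sinh t := Real.sinh_pos_iff.2 htp
      rw [g, Real.rpow_neg_one]
      exact inv_anti₀ hs (sinh_le_three_mul htp ht.2)
  have hcalc : ∫ t in Set.Ioc b 1, (3 * t)⁻¹ = -(Real.log b) / 3 := by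
    rw [← intervalIntegral.integral_of_le h1]
    have : ∀ t : ℝ, (3 * t)⁻¹ = (3:ℝ)⁻¹ * t⁻¹ := fun t => by rw [mul_inv]
    simp_rw [this]
    rw [intervalIntegral.integral_const_mul, integral_inv_of_pos h0 one_pos,
      Real.log_div one_ne_zero (ne_of_gt h0), Real.log_one]
    ring
  linarith

lemma arctanh_pos {y : ℝ} (h0 : 0 < y) (h1 : y < 1) : 0 < arctanh y := by
  have h2 : (1:ℝ) < (1 + y) / (1 - y) := (one_lt_div (by linarith)).2 (by linarith)
  have := Real.log_pos h2
  rw [arctanh]; linarith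

lemma arctanh_lt {y₁ y₂ : ℝ} (h0 : 0 ≤ y₁) (h12 : y₁ < y₂) (h1 : y₂ < 1) :
    arctanh y₁ < arctanh y₂ := by
  have hd1 : (0:ℝ) < 1 - y₁ := by linarith
  have hd2 : (0:ℝ) < 1 - y₂ := by linarith
  have hp1 : (0:ℝ) < (1 + y₁) / (1 - y₁) := div_pos (by linarith) hd1
  have hlt : (1 + y₁) / (1 - y₁) < (1 + y₂) / (1 - y₂) := by
    rw [div_lt_div_iff₀ hd1 hd2]; nlinarith
  have := Real.log_lt_log hp1 hlt
  rw [arctanh, arctanh]; linarith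

lemma arctanh_continuousAt {y : ℝ} (hm : -1 < y) (h1 : y < 1) :
    ContinuousAt arctanh y := by
  have hd : (1:ℝ) - y ≠ 0 := by intro h; linarith [h]
  have hp : (0:ℝ) < (1 + y) / (1 - y) := div_pos (by linarith) (by linarith)
  have hc1 : ContinuousAt (fun y : ℝ => (1 + y) / (1 - y)) y :=
    (continuousAt_const.add continuousAt_id).div
      (continuousAt_const.sub continuousAt_id) hd
  have hc2 : ContinuousAt Real.log ((1 + y) / (1 - y)) :=
    Real.continuousAt_log (ne_of_gt hp)
  have hc3 : ContinuousAt (fun y : ℝ => Real.log ((1 + y) / (1 - y))) y :=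
    ContinuousAt.comp (f := fun y : ℝ => (1 + y) / (1 - y)) hc2 hc1
  exact hc3.div_const 2

lemma arctanh_tendsto_atTop :
    Filter.Tendsto arctanh (nhdsWithin 1 (Set.Iio 1)) Filter.atTop := by
  have h1 : Filter.Tendsto (fun y : ℝ => 1 - y) (nhdsWithin 1 (Set.Iio 1))
      (nhdsWithin 0 (Set.Ioi 0)) := by
    rw [tendsto_nhdsWithin_iff]
    constructor
    · have h : Filter.Tendsto (fun y : ℝ => 1 - y) (nhds 1) (nhds 0) := by
        have := (continuous_const.sub continuous_id (f := fun y : ℝ => (1:ℝ))).tendsto 1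
        simpa [Pi.sub_def] using this
      exact h.mono_left nhdsWithin_le_nhds
    · exact eventually_nhdsWithin_of_forall fun y hy => by
        simp only [Set.mem_Iio] at hy ⊢; exact sub_pos.2 hy
  have h2 : Filter.Tendsto (fun y : ℝ => (1 - y)⁻¹) (nhdsWithin 1 (Set.Iio 1))
      Filter.atTop := tendsto_inv_nhdsGT_zero.comp h1
  have h3 : Filter.Tendsto (fun y : ℝ => (1 + y)) (nhdsWithin 1 (Set.Iio 1)) (nhds 2) := by
    have h : Filter.Tendsto (fun y : ℝ => (1 + y)) (nhds 1) (nhds 2) := by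
      have := (continuous_const.add continuous_id (f := fun y : ℝ => (1:ℝ))).tendsto 1
      norm_num at this; exact this
    exact h.mono_left nhdsWithin_le_nhds
  have h4 : Filter.Tendsto (fun y : ℝ => (1 + y) * (1 - y)⁻¹) (nhdsWithin 1 (Set.Iio 1))
      Filter.atTop := h3.pos_mul_atTop two_pos h2
  have h5 : Filter.Tendsto (fun y : ℝ => (1 + y) / (1 - y)) (nhdsWithin 1 (Set.Iio 1))
      Filter.atTop := by simpa [div_eq_mul_inv] using h4
  have h6 := Real.tendsto_log_atTop.comp h5
  exact h6.atTop_div_const two_pos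

end SMB

/-- Critical/supercritical mass of the ground-state branch: for `p ≥ 5`, the squared `L²`
norm `m(ω)` of the explicit ground state on the star graph is finite and positive,
strictly decreasing on `(0, ℓ)` with `ℓ = γ²/K²`, tends to `0` as `ω → ℓ⁻`, tends to `+∞`
as `ω → 0⁺`, and takes every value in `(0, ∞)`. -/
theorem supercritical_mass_branch (K : ℕ) (hK : 1 ≤ K) (γ p : ℝ)
    (hγ : γ < 0) (hp : 5 ≤ p)
    (ℓ : ℝ) (hℓ : ℓ = γ ^ 2 / (K : ℝ) ^ 2)
    (m : ℝ → ℝ)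
    (hm : ∀ ω ∈ Set.Ioo (0:ℝ) ℓ, m ω = (K : ℝ) *
      ∫ x in Set.Ioi (0:ℝ),
        (((p + 1) * ω / 2) ^ (1 / (p - 1)) *
          (Real.sinh ((p - 1) * Real.sqrt ω / 2 * x +
            arctanh (Real.sqrt (ω / ℓ)))) ^ (-2 / (p - 1))) ^ 2) :
    (∀ ω ∈ Set.Ioo (0:ℝ) ℓ,
      IntegrableOn (fun x =>
        (((p + 1) * ω / 2) ^ (1 / (p - 1)) *
          (Real.sinh ((p - 1) * Real.sqrt ω / 2 * x +
            arctanh (Real.sqrt (ω / ℓ)))) ^ (-2 / (p - 1))) ^ 2) (Set.Ioi 0) ∧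
      0 < m ω) ∧
    StrictAntiOn m (Set.Ioo 0 ℓ) ∧
    Filter.Tendsto m (nhdsWithin ℓ (Set.Iio ℓ)) (nhds 0) ∧
    Filter.Tendsto m (nhdsWithin 0 (Set.Ioi 0)) Filter.atTop ∧
    (∀ m₀ > (0:ℝ), ∃ ω ∈ Set.Ioo (0:ℝ) ℓ, m ω = m₀) := by
  classical
  have hK0 : (0:ℝ) < (K:ℝ) := by exact_mod_cast Nat.pos_of_ne_zero (by omega)
  have hγ0 : γ ≠ 0 := ne_of_lt hγ
  have hℓpos : 0 < ℓ := by rw [hℓ]; positivity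
  have hp1 : (0:ℝ) < p - 1 := by linarith
  set α : ℝ := 4 / (p - 1) with hαdef
  have hα : 0 < α := by positivity
  set e : ℝ := 2 / (p - 1) - 1/2 with hedef
  have he : e ≤ 0 := by
    rw [hedef, sub_nonpos, div_le_div_iff₀ hp1 (by norm_num : (0:ℝ) < 2)]
    linarith
  set cp : ℝ := ((p+1)/2) ^ ((2:ℝ)/(p-1)) * (2/(p-1)) with hcpdef
  have hcp : 0 < cp := mul_pos (Real.rpow_pos_of_pos (by linarith) _) (by positivity)
  set Kc : ℝ := (K:ℝ) * cp with hKcdef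
  have hKc : 0 < Kc := mul_pos hK0 hcp
  set bb : ℝ → ℝ := fun ω => arctanh (Real.sqrt (ω / ℓ)) with hbbdef
  set aa : ℝ → ℝ := fun ω => (p - 1) * Real.sqrt ω / 2 with haadef
  have hy01 : ∀ ω ∈ Set.Ioo (0:ℝ) ℓ,
      0 < Real.sqrt (ω/ℓ) ∧ Real.sqrt (ω/ℓ) < 1 := by
    intro ω hω
    refine ⟨Real.sqrt_pos.2 (div_pos hω.1 hℓpos), ?_⟩
    rw [Real.sqrt_lt' one_pos, one_pow]
    exact (div_lt_one hℓpos).2 hω.2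
  have hbbpos : ∀ ω ∈ Set.Ioo (0:ℝ) ℓ, 0 < bb ω := fun ω hω =>
    SMB.arctanh_pos (hy01 ω hω).1 (hy01 ω hω).2
  have haapos : ∀ ω ∈ Set.Ioo (0:ℝ) ℓ, 0 < aa ω := by
    intro ω hω
    have h1 : 0 < Real.sqrt ω := Real.sqrt_pos.2 hω.1
    simp only [haadef]
    positivity
  -- pointwise identity
  have hpt : ∀ ω ∈ Set.Ioo (0:ℝ) ℓ, ∀ x ∈ Set.Ioi (0:ℝ),
      (((p + 1) * ω / 2) ^ (1 / (p - 1)) *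
        (Real.sinh ((p - 1) * Real.sqrt ω / 2 * x +
          arctanh (Real.sqrt (ω / ℓ)))) ^ (-2 / (p - 1))) ^ 2
      = ((p + 1) * ω / 2) ^ ((2:ℝ) / (p - 1)) * SMB.g α (aa ω * x + bb ω) := by
    intro ω hω x hx
    have hC : 0 < (p + 1) * ω / 2 := by
      have h1 := hω.1; nlinarith
    have hxpos : 0 < x := hx
    have harg : 0 < aa ω * x + bb ω :=
      add_pos (mul_pos (haapos ω hω) hxpos) (hbbpos ω hω)
    have hs : 0 < Real.sinh (aa ω * x + bb ω) := Real.sinh_pos_iff.2 harg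
    have hshape : (p - 1) * Real.sqrt ω / 2 * x + arctanh (Real.sqrt (ω / ℓ))
        = aa ω * x + bb ω := rfl
    rw [hshape, SMB.g, mul_pow,
      ← Real.rpow_natCast (((p + 1) * ω / 2) ^ (1 / (p - 1))) 2,
      ← Real.rpow_natCast ((Real.sinh (aa ω * x + bb ω)) ^ (-2 / (p - 1))) 2,
      ← Real.rpow_mul hC.le, ← Real.rpow_mul hs.le]
    congr 1
    · congr 1
      push_cast
      ring
    · congr 1
      push_cast
      rw [hαdef]
      ring
  -- integrability of the model function
  have hint : ∀ ω ∈ Set.Ioo (0:ℝ) ℓ, IntegrableOn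
      (fun x => ((p+1)*ω/2) ^ ((2:ℝ)/(p-1)) * SMB.g α (aa ω * x + bb ω)) (Set.Ioi 0) := by
    intro ω hω
    apply Integrable.const_mul
    have hb := hbbpos ω hω
    have ha := haapos ω hω
    set c : ℝ := (1 - Real.exp (-2 * bb ω)) / 2 with hc
    have hcpos : 0 < c := by
      have h1 : Real.exp (-2 * bb ω) < 1 := Real.exp_lt_one_iff.2 (by nlinarith)
      simp only [hc]; linarith
    have hmeas : AEStronglyMeasurable (fun x => SMB.g α (aa ω * x + bb ω))
        (volume.restrict (Set.Ioi 0)) := by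
      apply ContinuousOn.aestronglyMeasurable _ measurableSet_Ioi
      apply (SMB.g_contOn α).comp
        ((continuous_const.mul continuous_id).add continuous_const).continuousOn
      intro x hx
      exact add_pos (mul_pos ha hx) hb
    refine Integrable.mono' ((exp_neg_integrableOn_Ioi 0
      (mul_pos hα ha)).const_mul (c ^ (-α))) hmeas ?_
    rw [ae_restrict_iff' measurableSet_Ioi]
    filter_upwards with x hx
    have hx0 : (0:ℝ) < x := hx
    have harg : bb ω ≤ aa ω * x + bb ω := by nlinarith
    have h0 : 0 < aa ω * x + bb ω := lt_of_lt_of_le hb harg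
    rw [Real.norm_eq_abs, abs_of_nonneg (SMB.g_nonneg h0)]
    calc SMB.g α (aa ω * x + bb ω)
        ≤ c ^ (-α) * Real.exp (-α * (aa ω * x + bb ω)) := SMB.g_le hα hb harg
      _ ≤ c ^ (-α) * Real.exp (-(α * aa ω) * x) := by
          apply mul_le_mul_of_nonneg_left (Real.exp_le_exp.2 (by nlinarith))
          exact (Real.rpow_pos_of_pos hcpos _).le
  -- change of variables
  have hcov : ∀ ω ∈ Set.Ioo (0:ℝ) ℓ,
      (∫ x in Set.Ioi (0:ℝ), SMB.g α (aa ω * x + bb ω)) = (aa ω)⁻¹ * SMB.F α (bb ω) := by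
    intro ω hω
    have ha := haapos ω hω
    have h1 : (∫ x in Set.Ioi (0:ℝ), SMB.g α (aa ω * x + bb ω))
        = (aa ω)⁻¹ • ∫ u in Set.Ioi (aa ω * 0), SMB.g α (u + bb ω) :=
      MeasureTheory.integral_comp_mul_left_Ioi (fun u => SMB.g α (u + bb ω)) 0 ha
    rw [h1, mul_zero, smul_eq_mul]
    congr 1
    have h2 := (measurePreserving_add_right volume (bb ω)).setIntegral_preimage_emb
      (measurableEmbedding_addRight (bb ω)) (SMB.g α) (Set.Ioi (bb ω))
    have hpre : (fun x => x + bb ω) ⁻¹' Set.Ioi (bb ω) = Set.Ioi (0:ℝ) := by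
      ext x; simp
    rw [SMB.F, ← h2, hpre]
  -- prefactor algebra
  have hDa : ∀ ω ∈ Set.Ioo (0:ℝ) ℓ,
      ((p+1)*ω/2) ^ ((2:ℝ)/(p-1)) * (aa ω)⁻¹ = cp * ω ^ e := by
    intro ω hω
    have hω0 := hω.1
    have h1 : (p+1)*ω/2 = ((p+1)/2) * ω := by ring
    have h2 : aa ω = ((p-1)/2) * ω ^ ((1:ℝ)/2) := by
      simp only [haadef, Real.sqrt_eq_rpow]; ring
    rw [h1, Real.mul_rpow (show (0:ℝ) ≤ (p+1)/2 by linarith) hω0.le, h2, mul_inv,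
      ← Real.rpow_neg hω0.le, inv_div]
    have h3 : ω ^ ((2:ℝ)/(p-1)) * ω ^ (-((1:ℝ)/2)) = ω ^ e := by
      have hexp : (2:ℝ)/(p-1) + -((1:ℝ)/2) = e := by rw [hedef]; ring
      rw [← Real.rpow_add hω0, hexp]
    calc ((p+1)/2:ℝ) ^ ((2:ℝ)/(p-1)) * ω ^ ((2:ℝ)/(p-1)) * (2/(p-1) * ω ^ (-((1:ℝ)/2)))
        = (((p+1)/2:ℝ) ^ ((2:ℝ)/(p-1)) * (2/(p-1))) *
          (ω ^ ((2:ℝ)/(p-1)) * ω ^ (-((1:ℝ)/2))) := by ring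
      _ = cp * ω ^ e := by rw [h3, hcpdef]
  -- value formula
  have hval : ∀ ω ∈ Set.Ioo (0:ℝ) ℓ, m ω = Kc * (ω ^ e * SMB.F α (bb ω)) := by
    intro ω hω
    rw [hm ω hω,
      MeasureTheory.setIntegral_congr_fun measurableSet_Ioi (fun x hx => hpt ω hω x hx),
      MeasureTheory.integral_const_mul, hcov ω hω]
    have h := hDa ω hω
    calc (K:ℝ) * (((p+1)*ω/2) ^ ((2:ℝ)/(p-1)) * ((aa ω)⁻¹ * SMB.F α (bb ω)))
        = (K:ℝ) * ((((p+1)*ω/2) ^ ((2:ℝ)/(p-1)) * (aa ω)⁻¹) * SMB.F α (bb ω)) := by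
          ring
      _ = (K:ℝ) * ((cp * ω ^ e) * SMB.F α (bb ω)) := by rw [h]
      _ = Kc * (ω ^ e * SMB.F α (bb ω)) := by rw [hKcdef]; ring
  -- part 1
  have hpart1 : ∀ ω ∈ Set.Ioo (0:ℝ) ℓ,
      IntegrableOn (fun x =>
        (((p + 1) * ω / 2) ^ (1 / (p - 1)) *
          (Real.sinh ((p - 1) * Real.sqrt ω / 2 * x +
            arctanh (Real.sqrt (ω / ℓ)))) ^ (-2 / (p - 1))) ^ 2) (Set.Ioi 0) ∧
      0 < m ω := by
    intro ω hω
    constructor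
    · exact IntegrableOn.congr_fun (hint ω hω)
        (fun x hx => (hpt ω hω x hx).symm) measurableSet_Ioi
    · rw [hval ω hω]
      exact mul_pos hKc (mul_pos (Real.rpow_pos_of_pos hω.1 _)
        (SMB.F_pos hα (hbbpos ω hω)))
  -- strict monotonicity of bb
  have hbmono : ∀ ω₁ ∈ Set.Ioo (0:ℝ) ℓ, ∀ ω₂ ∈ Set.Ioo (0:ℝ) ℓ, ω₁ < ω₂ →
      bb ω₁ < bb ω₂ := by
    intro ω₁ h1 ω₂ h2 hlt
    have hsq : Real.sqrt (ω₁ / ℓ) < Real.sqrt (ω₂ / ℓ) := by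
      apply Real.sqrt_lt_sqrt (div_nonneg h1.1.le hℓpos.le)
      exact div_lt_div_of_pos_right hlt hℓpos
    exact SMB.arctanh_lt (hy01 ω₁ h1).1.le hsq (hy01 ω₂ h2).2
  -- part 2
  have hpart2 : StrictAntiOn m (Set.Ioo 0 ℓ) := by
    intro ω₁ h1 ω₂ h2 hlt
    rw [hval ω₁ h1, hval ω₂ h2]
    have hb1 := hbbpos ω₁ h1
    have hF2 : SMB.F α (bb ω₂) < SMB.F α (bb ω₁) :=
      SMB.F_lt hα hb1 (hbmono ω₁ h1 ω₂ h2 hlt)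
    have hF1pos : 0 < SMB.F α (bb ω₁) := SMB.F_pos hα hb1
    have hre : ω₂ ^ e ≤ ω₁ ^ e := Real.rpow_le_rpow_of_nonpos h1.1 hlt.le he
    have hr2 : 0 < ω₂ ^ e := Real.rpow_pos_of_pos h2.1 _
    apply mul_lt_mul_of_pos_left _ hKc
    calc ω₂ ^ e * SMB.F α (bb ω₂) < ω₂ ^ e * SMB.F α (bb ω₁) :=
          mul_lt_mul_of_pos_left hF2 hr2
      _ ≤ ω₁ ^ e * SMB.F α (bb ω₁) := mul_le_mul_of_nonneg_right hre hF1pos.le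
  -- part 3
  have hIooℓ : Set.Ioo (0:ℝ) ℓ ∈ nhdsWithin ℓ (Set.Iio ℓ) :=
    Ioo_mem_nhdsLT_of_mem ⟨hℓpos, le_rfl⟩
  have hpart3 : Filter.Tendsto m (nhdsWithin ℓ (Set.Iio ℓ)) (nhds 0) := by
    have hy_t : Filter.Tendsto (fun ω => Real.sqrt (ω / ℓ))
        (nhdsWithin ℓ (Set.Iio ℓ)) (nhdsWithin 1 (Set.Iio 1)) := by
      rw [tendsto_nhdsWithin_iff]
      constructor
      · have hc : Filter.Tendsto (fun ω => Real.sqrt (ω / ℓ)) (nhds ℓ) (nhds 1) := by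
          have h := (Real.continuous_sqrt.comp (continuous_id.div_const ℓ)).tendsto ℓ
          simpa [div_self hℓpos.ne', Function.comp_def] using h
        exact hc.mono_left nhdsWithin_le_nhds
      · apply eventually_nhdsWithin_of_forall
        intro ω hω
        simp only [Set.mem_Iio] at hω ⊢
        rcases le_or_gt ω 0 with h | h
        · have hd : ω / ℓ ≤ 0 := div_nonpos_of_nonpos_of_nonneg h hℓpos.le
          rw [Real.sqrt_eq_zero'.2 hd]
          norm_num
        · rw [Real.sqrt_lt' one_pos, one_pow]
          exact (div_lt_one hℓpos).2 hω
    have hb_t : Filter.Tendsto bb (nhdsWithin ℓ (Set.Iio ℓ)) Filter.atTop :=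
      SMB.arctanh_tendsto_atTop.comp hy_t
    have hF_t : Filter.Tendsto (fun ω => SMB.F α (bb ω))
        (nhdsWithin ℓ (Set.Iio ℓ)) (nhds 0) := (SMB.F_tendsto_zero hα).comp hb_t
    have hr_t : Filter.Tendsto (fun ω : ℝ => Kc * ω ^ e)
        (nhdsWithin ℓ (Set.Iio ℓ)) (nhds (Kc * ℓ ^ e)) := by
      have hc : ContinuousAt (fun ω : ℝ => ω ^ e) ℓ :=
        Real.continuousAt_rpow_const ℓ e (Or.inl hℓpos.ne')
      exact (continuousAt_const.mul hc).tendsto.mono_left nhdsWithin_le_nhds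
    have hprod := hr_t.mul hF_t
    rw [mul_zero] at hprod
    refine hprod.congr' ?_
    filter_upwards [hIooℓ] with ω hω
    rw [hval ω hω]; ring
  -- limits at 0
  have hIoo0 : Set.Ioo (0:ℝ) ℓ ∈ nhdsWithin 0 (Set.Ioi 0) :=
    Ioo_mem_nhdsGT_of_mem ⟨le_rfl, hℓpos⟩
  have hy_t0 : Filter.Tendsto (fun ω => Real.sqrt (ω / ℓ))
      (nhdsWithin 0 (Set.Ioi 0)) (nhds 0) := by
    have h := (Real.continuous_sqrt.comp (continuous_id.div_const ℓ)).tendsto 0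
    have h' := h.mono_left (nhdsWithin_le_nhds (s := Set.Ioi (0:ℝ)))
    simpa [Function.comp_def] using h'
  have harc0 : arctanh 0 = 0 := by simp [arctanh]
  have hbb_t0 : Filter.Tendsto bb (nhdsWithin 0 (Set.Ioi 0)) (nhds 0) := by
    have hc := SMB.arctanh_continuousAt (by norm_num : (-1:ℝ) < 0) one_pos
    have h2 := hc.tendsto.comp hy_t0
    rw [harc0] at h2
    exact h2
  have hbb_le1 : ∀ᶠ ω in nhdsWithin 0 (Set.Ioi 0), bb ω ≤ 1 := by
    filter_upwards [hbb_t0.eventually_lt_const one_pos] with ω hω using hω.le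
  -- part 4
  have hpart4 : Filter.Tendsto m (nhdsWithin 0 (Set.Ioi 0)) Filter.atTop := by
    rcases eq_or_lt_of_le hp with hp5 | hp5
    · -- p = 5
      have hα1 : α = 1 := by rw [hαdef, ← hp5]; norm_num
      have he0 : e = 0 := by rw [hedef, ← hp5]; norm_num
      have h1 : Filter.Tendsto (fun ω => Real.log (bb ω))
          (nhdsWithin 0 (Set.Ioi 0)) Filter.atBot := by
        apply Real.tendsto_log_nhdsGT_zero.comp
        rw [tendsto_nhdsWithin_iff]
        refine ⟨hbb_t0, ?_⟩
        filter_upwards [hIoo0] with ω hω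
        exact hbbpos ω hω
      have h2 : Filter.Tendsto (fun ω => -(Real.log (bb ω)))
          (nhdsWithin 0 (Set.Ioi 0)) Filter.atTop := Filter.tendsto_neg_atBot_atTop.comp h1
      have hlow : Filter.Tendsto (fun ω => Kc * (-(Real.log (bb ω)) / 3))
          (nhdsWithin 0 (Set.Ioi 0)) Filter.atTop :=
        (h2.atTop_div_const (by norm_num : (0:ℝ) < 3)).const_mul_atTop hKc
      apply Filter.tendsto_atTop_mono' _ _ hlow
      filter_upwards [hIoo0, hbb_le1] with ω h1' h2'
      rw [hval ω h1', he0, Real.rpow_zero, one_mul, hα1]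
      have hlb := SMB.F_one_lb (hbbpos ω h1') h2'
      exact mul_le_mul_of_nonneg_left hlb hKc.le
    · -- 5 < p
      have he' : e < 0 := by
        rw [hedef, sub_neg, div_lt_div_iff₀ hp1 (by norm_num : (0:ℝ) < 2)]
        linarith
      have hFfix : 0 < SMB.F α 1 := SMB.F_pos hα one_pos
      have hrt : Filter.Tendsto (fun ω : ℝ => ω ^ e)
          (nhdsWithin 0 (Set.Ioi 0)) Filter.atTop := by
        have h1 : Filter.Tendsto (fun ω : ℝ => ω⁻¹)
            (nhdsWithin 0 (Set.Ioi 0)) Filter.atTop := tendsto_inv_nhdsGT_zero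
        have h2 := (tendsto_rpow_atTop (by linarith : (0:ℝ) < -e)).comp h1
        refine h2.congr' ?_
        filter_upwards [self_mem_nhdsWithin] with ω hω
        have hω0 : (0:ℝ) < ω := hω
        simp only [Function.comp_apply]
        rw [Real.inv_rpow hω0.le, ← Real.rpow_neg hω0.le, neg_neg]
      have hlow : Filter.Tendsto (fun ω : ℝ => (Kc * SMB.F α 1) * ω ^ e)
          (nhdsWithin 0 (Set.Ioi 0)) Filter.atTop :=
        hrt.const_mul_atTop (mul_pos hKc hFfix)
      apply Filter.tendsto_atTop_mono' _ _ hlow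
      filter_upwards [hIoo0, hbb_le1] with ω h1' h2'
      rw [hval ω h1']
      have hFge : SMB.F α 1 ≤ SMB.F α (bb ω) := SMB.F_le hα (hbbpos ω h1') h2'
      have hrpos : 0 < ω ^ e := Real.rpow_pos_of_pos h1'.1 _
      have hstep := mul_le_mul_of_nonneg_left hFge (mul_pos hKc hrpos).le
      calc Kc * SMB.F α 1 * ω ^ e = Kc * ω ^ e * SMB.F α 1 := by ring
        _ ≤ Kc * ω ^ e * SMB.F α (bb ω) := hstep
        _ = Kc * (ω ^ e * SMB.F α (bb ω)) := by ring
  -- continuity of m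
  have hcontm : ContinuousOn m (Set.Ioo 0 ℓ) := by
    apply ContinuousOn.congr _ (fun ω hω => hval ω hω)
    apply ContinuousOn.mul continuousOn_const
    apply ContinuousOn.mul
    · intro ω hω
      exact (Real.continuousAt_rpow_const ω e (Or.inl (ne_of_gt hω.1))).continuousWithinAt
    · apply (SMB.F_continuousOn hα).comp
      · intro ω hω
        have hy := hy01 ω hω
        have hc1 : ContinuousAt (fun ω : ℝ => Real.sqrt (ω / ℓ)) ω :=
          (Real.continuous_sqrt.comp (continuous_id.div_const ℓ)).continuousAt
        exact (ContinuousAt.comp (f := fun ω : ℝ => Real.sqrt (ω / ℓ))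
          (SMB.arctanh_continuousAt (by linarith [hy.1]) hy.2) hc1).continuousWithinAt
      · intro ω hω
        exact hbbpos ω hω
  -- part 5
  have hpart5 : ∀ m₀ > (0:ℝ), ∃ ω ∈ Set.Ioo (0:ℝ) ℓ, m ω = m₀ := by
    intro m₀ hm₀
    have hev1 : ∀ᶠ ω in nhdsWithin ℓ (Set.Iio ℓ), m ω < m₀ :=
      hpart3.eventually_lt_const hm₀
    obtain ⟨ω₁, hω₁m, hω₁⟩ := (hev1.and (Filter.eventually_of_mem hIooℓ (fun x hx => hx))).exists
    have hev2 : ∀ᶠ ω in nhdsWithin 0 (Set.Ioi 0), m₀ < m ω :=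
      hpart4.eventually_gt_atTop m₀
    have hIooω₁ : Set.Ioo (0:ℝ) ω₁ ∈ nhdsWithin 0 (Set.Ioi 0) :=
      Ioo_mem_nhdsGT_of_mem ⟨le_rfl, hω₁.1⟩
    obtain ⟨ω₂, hω₂m, hω₂⟩ :=
      (hev2.and (Filter.eventually_of_mem hIooω₁ (fun x hx => hx))).exists
    have hsub : Set.Icc ω₂ ω₁ ⊆ Set.Ioo 0 ℓ := fun x hx =>
      ⟨lt_of_lt_of_le hω₂.1 hx.1, lt_of_le_of_lt hx.2 hω₁.2⟩
    have hivt := intermediate_value_Icc' (le_of_lt hω₂.2) (hcontm.mono hsub)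
    obtain ⟨ω, hωIcc, hωeq⟩ := hivt ⟨hω₁m.le, hω₂m.le⟩
    exact ⟨ω, hsub hωIcc, hωeq⟩
  exact ⟨hpart1, hpart2, hpart3, hpart4, hpart5⟩
end
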